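/- arXiv:1504.05705 — 8 statements merged into one kernel-verified Lean document; each statement's English description precedes it below -/
import Mathlib

section
/- Under assumptions (g1)–(g4) on the numerical Hamiltonian g, if F : ℝ≥0 → ℝ is continuous and nondecreasing, then for any grid initial data u⁰ and terminal data m^{N_T} ∈ 𝒦_h, the discrete mean field games system — for all 0 ≤ i,j < N_h and 0 ≤ k < N_T: (u^{k+1}_{i,j} − u^k_{i,j})/Δt − ν(Δ_h u^{k+1})_{i,j} + g(x_{i,j}, [∇_h u^{k+1}]_{i,j}) = F(m^k_{i,j}) and (m^{k+1}_{i,j} − m^k_{i,j})/Δt + ν(Δ_h m^k)_{i,j} + 𝒯_{i,j}(u^{k+1}, m^k) = 0, with m^k ∈ 𝒦_h for all k — has at most one solution: any two solutions ((u^n),(m^n)) and ((ũ^n),(m̃^n)) coincide. -/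
open Finset

noncomputable section

abbrev Torus : Type := AddCircle (1:ℝ) × AddCircle (1:ℝ)

/-- The grid step `h = 1/N_h`. -/
def gridh (N : ℕ) : ℝ := 1 / N

/-- The grid point `x_{i,j} = (ih, jh)` on the torus. -/
def gridPt (N : ℕ) (i j : ZMod N) : Torus :=
  (((i.val : ℝ) * gridh N : ℝ), ((j.val : ℝ) * gridh N : ℝ))

/-- Forward difference in the first direction. -/
def D1 {N : ℕ} (v : ZMod N → ZMod N → ℝ) (i j : ZMod N) : ℝ :=
  (v (i + 1) j - v i j) / gridh N

/-- Forward difference in the second direction. -/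
def D2 {N : ℕ} (v : ZMod N → ZMod N → ℝ) (i j : ZMod N) : ℝ :=
  (v i (j + 1) - v i j) / gridh N

/-- `[∇_h v]_{i,j} ∈ ℝ⁴`. -/
def nablah {N : ℕ} (v : ZMod N → ZMod N → ℝ) (i j : ZMod N) : Fin 4 → ℝ :=
  ![D1 v i j, D1 v (i - 1) j, D2 v i j, D2 v i (j - 1)]

/-- The five-point discrete Laplacian. -/
def laph {N : ℕ} (v : ZMod N → ZMod N → ℝ) (i j : ZMod N) : ℝ :=
  -(4 * v i j - v (i + 1) j - v (i - 1) j - v i (j + 1) - v i (j - 1)) / (gridh N) ^ 2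

/-- Scalar product on ℝ⁴. -/
def dot4 (p q : Fin 4 → ℝ) : ℝ := p 0 * q 0 + p 1 * q 1 + p 2 * q 2 + p 3 * q 3

/-- Euclidean norm on ℝ⁴. -/
def norm4 (p : Fin 4 → ℝ) : ℝ := Real.sqrt (dot4 p p)

/-- The discrete transport operator `𝒯_{i,j}(u,m)`. -/
def Transp {N : ℕ} (gq : Torus → (Fin 4 → ℝ) → (Fin 4 → ℝ))
    (u m : ZMod N → ZMod N → ℝ) (i j : ZMod N) : ℝ :=
  (1 / gridh N) *
    ((m i j * gq (gridPt N i j) (nablah u i j) 0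
        - m (i - 1) j * gq (gridPt N (i - 1) j) (nablah u (i - 1) j) 0
        + m (i + 1) j * gq (gridPt N (i + 1) j) (nablah u (i + 1) j) 1
        - m i j * gq (gridPt N i j) (nablah u i j) 1)
      + (m i j * gq (gridPt N i j) (nablah u i j) 2
        - m i (j - 1) * gq (gridPt N i (j - 1)) (nablah u i (j - 1)) 2
        + m i (j + 1) * gq (gridPt N i (j + 1)) (nablah u i (j + 1)) 3
        - m i j * gq (gridPt N i j) (nablah u i j) 3))

/-- Membership in the set `𝒦_h` of discrete probability densities. -/
def inKh {N : ℕ} [NeZero N] (m : ZMod N → ZMod N → ℝ) : Prop :=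
  (∀ i j, 0 ≤ m i j) ∧ (gridh N) ^ 2 * ∑ i, ∑ j, m i j = 1

/-- (g1): monotonicity of the numerical Hamiltonian. -/
def Hg1 (g : Torus → (Fin 4 → ℝ) → ℝ) : Prop :=
  ∀ x (q : Fin 4 → ℝ) (s t : ℝ), s ≤ t →
    g x (Function.update q 0 t) ≤ g x (Function.update q 0 s) ∧
    g x (Function.update q 2 t) ≤ g x (Function.update q 2 s) ∧
    g x (Function.update q 1 s) ≤ g x (Function.update q 1 t) ∧
    g x (Function.update q 3 s) ≤ g x (Function.update q 3 t)

/-- (g2): consistency with the Hamiltonian `H`. -/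
def Hg2 (g : Torus → (Fin 4 → ℝ) → ℝ) (H : Torus → ℝ × ℝ → ℝ) : Prop :=
  ∀ x (q1 q2 : ℝ), g x ![q1, q1, q2, q2] = H x (q1, q2)

/-- (g3): regularity; `g` is continuous and C¹ w.r.t. `q`, with `q`-gradient `gq`. -/
def Hg3 (g : Torus → (Fin 4 → ℝ) → ℝ) (gq : Torus → (Fin 4 → ℝ) → (Fin 4 → ℝ)) : Prop :=
  Continuous (fun p : Torus × (Fin 4 → ℝ) => g p.1 p.2) ∧
  (∀ x, ContDiff ℝ 1 (g x)) ∧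
  (∀ x (q : Fin 4 → ℝ) (i : Fin 4),
      HasDerivAt (fun t => g x (Function.update q i t)) (gq x q i) (q i))

/-- (g4): convexity of `q ↦ g(x,q)`. -/
def Hg4 (g : Torus → (Fin 4 → ℝ) → ℝ) : Prop :=
  ∀ x, ConvexOn ℝ Set.univ (g x)

/-- (g5): the growth conditions. -/
def Hg5 (g : Torus → (Fin 4 → ℝ) → ℝ) (gq : Torus → (Fin 4 → ℝ) → (Fin 4 → ℝ)) : Prop :=
  ∃ c1 c2 c3 c4 : ℝ, 0 < c1 ∧ 0 < c2 ∧ 0 < c3 ∧ 0 < c4 ∧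
    ∀ x q, c1 * (norm4 (gq x q)) ^ 2 - c2 ≤ dot4 (gq x q) q - g x q ∧
      norm4 (gq x q) ≤ c3 * norm4 q + c4

/-- The discrete Bellman equations. -/
def BellmanEq {N : ℕ} (g : Torus → (Fin 4 → ℝ) → ℝ) (ν Δt : ℝ) (F : ℝ → ℝ)
    (u m : ℕ → ZMod N → ZMod N → ℝ) (NT : ℕ) : Prop :=
  ∀ k < NT, ∀ i j, (u (k + 1) i j - u k i j) / Δt - ν * laph (u (k + 1)) i j
    + g (gridPt N i j) (nablah (u (k + 1)) i j) = F (m k i j)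

/-- The discrete Fokker–Planck equations. -/
def FPEq {N : ℕ} (gq : Torus → (Fin 4 → ℝ) → (Fin 4 → ℝ)) (ν Δt : ℝ)
    (u m : ℕ → ZMod N → ZMod N → ℝ) (NT : ℕ) : Prop :=
  ∀ k < NT, ∀ i j, (m (k + 1) i j - m k i j) / Δt + ν * laph (m k) i j
    + Transp gq (u (k + 1)) (m k) i j = 0


set_option linter.unusedSectionVars false

namespace MFGaux

open Finset Function

variable {N : ℕ} [NeZero N]

lemma gridh_pos : 0 < gridh N := by
  have : 0 < (N:ℝ) := by exact_mod_cast Nat.pos_of_ne_zero (NeZero.ne N)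
  unfold gridh; exact div_pos one_pos this

@[simp] lemma nablah_zero (v : ZMod N → ZMod N → ℝ) (i j : ZMod N) :
    nablah v i j 0 = D1 v i j := rfl
@[simp] lemma nablah_one (v : ZMod N → ZMod N → ℝ) (i j : ZMod N) :
    nablah v i j 1 = D1 v (i - 1) j := rfl
@[simp] lemma nablah_two (v : ZMod N → ZMod N → ℝ) (i j : ZMod N) :
    nablah v i j 2 = D2 v i j := rfl
@[simp] lemma nablah_three (v : ZMod N → ZMod N → ℝ) (i j : ZMod N) :
    nablah v i j 3 = D2 v i (j - 1) := rfl

/-- double sum over the grid -/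
def gsum (f : ZMod N → ZMod N → ℝ) : ℝ := ∑ i, ∑ j, f i j

lemma gsum_congr {f g : ZMod N → ZMod N → ℝ} (h : ∀ i j, f i j = g i j) :
    gsum f = gsum g :=
  Finset.sum_congr rfl fun i _ => Finset.sum_congr rfl fun j _ => h i j

lemma gsum_add (f g : ZMod N → ZMod N → ℝ) :
    gsum (fun i j => f i j + g i j) = gsum f + gsum g := by
  simp [gsum, Finset.sum_add_distrib]

lemma gsum_sub (f g : ZMod N → ZMod N → ℝ) :
    gsum (fun i j => f i j - g i j) = gsum f - gsum g := by
  simp [gsum, Finset.sum_sub_distrib]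

lemma gsum_smul (c : ℝ) (f : ZMod N → ZMod N → ℝ) :
    gsum (fun i j => c * f i j) = c * gsum f := by
  simp [gsum, Finset.mul_sum]

lemma gsum_nonneg {f : ZMod N → ZMod N → ℝ} (h : ∀ i j, 0 ≤ f i j) : 0 ≤ gsum f :=
  Finset.sum_nonneg fun i _ => Finset.sum_nonneg fun j _ => h i j

lemma gsum_nonpos {f : ZMod N → ZMod N → ℝ} (h : ∀ i j, f i j ≤ 0) : gsum f ≤ 0 :=
  Finset.sum_nonpos fun i _ => Finset.sum_nonpos fun j _ => h i j

lemma gsum_eq_zero {f : ZMod N → ZMod N → ℝ} (h : ∀ i j, 0 ≤ f i j)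
    (h0 : gsum f = 0) : ∀ i j, f i j = 0 := by
  intro i j
  have h1 := (Finset.sum_eq_zero_iff_of_nonneg
    (fun i _ => Finset.sum_nonneg (fun j _ => h i j))).mp h0 i (mem_univ i)
  exact (Finset.sum_eq_zero_iff_of_nonneg (fun j _ => h i j)).mp h1 j (mem_univ j)

lemma sum_shift (f : ZMod N → ℝ) (a : ZMod N) : ∑ i, f (i + a) = ∑ i, f i :=
  Fintype.sum_equiv (Equiv.addRight a) _ _ (fun _ => rfl)

lemma gsum_shift_i (f : ZMod N → ZMod N → ℝ) (a : ZMod N) :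
    gsum (fun i j => f (i + a) j) = gsum f := by
  unfold gsum
  exact sum_shift (fun i => ∑ j, f i j) a

lemma gsum_shift_j (f : ZMod N → ZMod N → ℝ) (a : ZMod N) :
    gsum (fun i j => f i (j + a)) = gsum f := by
  unfold gsum
  rw [Finset.sum_comm]
  rw [show (∑ j, ∑ i, f i (j + a)) = ∑ j, ∑ i, (fun j' i' => f i' j') (j+a) i from rfl]
  rw [sum_shift (fun j => ∑ i, f i j) a]
  exact Finset.sum_comm

lemma corr_ip (A B : ZMod N → ZMod N → ℝ) :
    gsum (fun i j => A (i + 1) j * B i j) = gsum (fun i j => A i j * B (i - 1) j) := by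
  have := gsum_shift_i (fun i j => A i j * B (i - 1) j) 1
  simp only [add_sub_cancel_right] at this
  exact this

lemma corr_im (A B : ZMod N → ZMod N → ℝ) :
    gsum (fun i j => A (i - 1) j * B i j) = gsum (fun i j => A i j * B (i + 1) j) := by
  have := gsum_shift_i (fun i j => A i j * B (i + 1) j) (-1)
  simp only [← sub_eq_add_neg, sub_add_cancel] at this
  exact this

lemma corr_jp (A B : ZMod N → ZMod N → ℝ) :
    gsum (fun i j => A i (j + 1) * B i j) = gsum (fun i j => A i j * B i (j - 1)) := by
  have := gsum_shift_j (fun i j => A i j * B i (j - 1)) 1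
  simp only [add_sub_cancel_right] at this
  exact this

lemma corr_jm (A B : ZMod N → ZMod N → ℝ) :
    gsum (fun i j => A i (j - 1) * B i j) = gsum (fun i j => A i j * B i (j + 1)) := by
  have := gsum_shift_j (fun i j => A i j * B i (j + 1)) (-1)
  simp only [← sub_eq_add_neg, sub_add_cancel] at this
  exact this

/-- symmetry of the discrete Laplacian -/
lemma laph_symm (a b : ZMod N → ZMod N → ℝ) :
    gsum (fun i j => laph a i j * b i j) = gsum (fun i j => a i j * laph b i j) := by
  have expand : ∀ c d : ZMod N → ZMod N → ℝ,
      gsum (fun i j => laph c i j * d i j)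
        = ((gridh N)^2)⁻¹ * (gsum (fun i j => c (i + 1) j * d i j)
            + gsum (fun i j => c (i - 1) j * d i j)
            + gsum (fun i j => c i (j + 1) * d i j)
            + gsum (fun i j => c i (j - 1) * d i j)
            - 4 * gsum (fun i j => c i j * d i j)) := by
    intro c d
    rw [show gsum (fun i j => laph c i j * d i j)
        = gsum (fun i j => ((gridh N)^2)⁻¹ * (c (i + 1) j * d i j + (c (i - 1) j * d i j
            + (c i (j + 1) * d i j + (c i (j - 1) * d i j - 4 * (c i j * d i j)))))) from
      gsum_congr (by intro i j; unfold laph; ring)]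
    rw [gsum_smul, gsum_add, gsum_add, gsum_add, gsum_sub, gsum_smul]
    ring
  have expand' : gsum (fun i j => a i j * laph b i j)
      = ((gridh N)^2)⁻¹ * (gsum (fun i j => a i j * b (i - 1) j)
          + gsum (fun i j => a i j * b (i + 1) j)
          + gsum (fun i j => a i j * b i (j - 1))
          + gsum (fun i j => a i j * b i (j + 1))
          - 4 * gsum (fun i j => a i j * b i j)) := by
    rw [show gsum (fun i j => a i j * laph b i j)
        = gsum (fun i j => ((gridh N)^2)⁻¹ * (a i j * b (i - 1) j + (a i j * b (i + 1) j
            + (a i j * b i (j - 1) + (a i j * b i (j + 1) - 4 * (a i j * b i j)))))) from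
      gsum_congr (by intro i j; unfold laph; ring)]
    rw [gsum_smul, gsum_add, gsum_add, gsum_add, gsum_sub, gsum_smul]
    ring
  rw [expand a b, expand', corr_ip a b, corr_im a b, corr_jp a b, corr_jm a b]

/-- the discrete transport operator is (minus) the adjoint of `m ↦ m ⋅ g_q(∇u) ⋅ ∇(·)` -/
lemma transp_adjoint (gq : Torus → (Fin 4 → ℝ) → (Fin 4 → ℝ))
    (u m w : ZMod N → ZMod N → ℝ) :
    gsum (fun i j => Transp gq u m i j * w i j)
      = - gsum (fun i j =>
          m i j * dot4 (gq (gridPt N i j) (nablah u i j)) (nablah w i j)) := by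
  set P0 : ZMod N → ZMod N → ℝ := fun i j => m i j * gq (gridPt N i j) (nablah u i j) 0 with hP0
  set P1 : ZMod N → ZMod N → ℝ := fun i j => m i j * gq (gridPt N i j) (nablah u i j) 1 with hP1
  set P2 : ZMod N → ZMod N → ℝ := fun i j => m i j * gq (gridPt N i j) (nablah u i j) 2 with hP2
  set P3 : ZMod N → ZMod N → ℝ := fun i j => m i j * gq (gridPt N i j) (nablah u i j) 3 with hP3
  have hL : gsum (fun i j => Transp gq u m i j * w i j)
      = (gridh N)⁻¹ * (gsum (fun i j => P0 i j * w i j)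
          - gsum (fun i j => P0 (i - 1) j * w i j)
          + (gsum (fun i j => P1 (i + 1) j * w i j)
          - gsum (fun i j => P1 i j * w i j))
          + (gsum (fun i j => P2 i j * w i j)
          - gsum (fun i j => P2 i (j - 1) * w i j))
          + (gsum (fun i j => P3 i (j + 1) * w i j)
          - gsum (fun i j => P3 i j * w i j))) := by
    rw [show gsum (fun i j => Transp gq u m i j * w i j)
        = gsum (fun i j => (gridh N)⁻¹ * (P0 i j * w i j - P0 (i - 1) j * w i j
            + (P1 (i + 1) j * w i j - P1 i j * w i j)
            + (P2 i j * w i j - P2 i (j - 1) * w i j)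
            + (P3 (i + 1 - 1) (j + 1) * w i j - P3 i j * w i j))) from
      gsum_congr (by intro i j; unfold Transp; simp only [hP0, hP1, hP2, hP3,
        add_sub_cancel_right]; unfold gridh; ring)]
    rw [gsum_smul, gsum_add, gsum_add, gsum_add, gsum_sub, gsum_sub, gsum_sub, gsum_sub]
    simp only [add_sub_cancel_right]
  have hR : - gsum (fun i j =>
        m i j * dot4 (gq (gridPt N i j) (nablah u i j)) (nablah w i j))
      = (gridh N)⁻¹ * (gsum (fun i j => P0 i j * w i j)
          - gsum (fun i j => P0 i j * w (i + 1) j)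
          + (gsum (fun i j => P1 i j * w (i - 1) j)
          - gsum (fun i j => P1 i j * w i j))
          + (gsum (fun i j => P2 i j * w i j)
          - gsum (fun i j => P2 i j * w i (j + 1)))
          + (gsum (fun i j => P3 i j * w i (j - 1))
          - gsum (fun i j => P3 i j * w i j))) := by
    rw [show gsum (fun i j =>
          m i j * dot4 (gq (gridPt N i j) (nablah u i j)) (nablah w i j))
        = gsum (fun i j => (gridh N)⁻¹ * (P0 i j * w (i + 1) j - P0 i j * w i j
            + (P1 i j * w i j - P1 i j * w (i - 1) j)
            + (P2 i j * w i (j + 1) - P2 i j * w i j)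
            + (P3 i j * w i j - P3 i j * w i (j - 1)))) from
      gsum_congr (by intro i j; unfold dot4
                     simp only [hP0, hP1, hP2, hP3, nablah_zero, nablah_one, nablah_two,
                       nablah_three]
                     unfold D1 D2
                     rw [sub_add_cancel, sub_add_cancel]
                     unfold gridh; ring)]
    rw [gsum_smul, gsum_add, gsum_add, gsum_add, gsum_sub, gsum_sub, gsum_sub, gsum_sub]
    ring
  rw [hL, hR, corr_im P0 w, corr_ip P1 w, corr_jm P2 w, corr_jp P3 w]

/-- signs of the gradient of a numerical Hamiltonian satisfying (g1) -/
lemma gq_signs {g : Torus → (Fin 4 → ℝ) → ℝ} {gq : Torus → (Fin 4 → ℝ) → (Fin 4 → ℝ)}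
    (hg1 : Hg1 g) (hg3 : Hg3 g gq) (x : Torus) (q : Fin 4 → ℝ) :
    gq x q 0 ≤ 0 ∧ 0 ≤ gq x q 1 ∧ gq x q 2 ≤ 0 ∧ 0 ≤ gq x q 3 := by
  have key : ∀ (i : Fin 4) (anti : ∀ s t : ℝ, s ≤ t →
      g x (Function.update q i t) ≤ g x (Function.update q i s)), gq x q i ≤ 0 := by
    intro i anti
    have hd : HasDerivAt (fun t => g x (Function.update q i t)) (gq x q i) (q i) :=
      hg3.2.2 x q i
    have htend := hasDerivAt_iff_tendsto_slope.mp hd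
    have htend' : Filter.Tendsto (slope (fun t => g x (Function.update q i t)) (q i))
        (nhdsWithin (q i) (Set.Ioi (q i))) (nhds (gq x q i)) :=
      htend.mono_left (nhdsWithin_mono _ (fun t ht => ne_of_gt ht))
    refine le_of_tendsto htend' ?_
    filter_upwards [self_mem_nhdsWithin] with t ht
    rw [slope_def_field]
    apply div_nonpos_of_nonpos_of_nonneg
    · have := anti (q i) t (le_of_lt ht)
      linarith
    · have : q i < t := ht
      linarith
  have key' : ∀ (i : Fin 4) (mono : ∀ s t : ℝ, s ≤ t →
      g x (Function.update q i s) ≤ g x (Function.update q i t)), 0 ≤ gq x q i := by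
    intro i mono
    have hd : HasDerivAt (fun t => g x (Function.update q i t)) (gq x q i) (q i) :=
      hg3.2.2 x q i
    have htend := hasDerivAt_iff_tendsto_slope.mp hd
    have htend' : Filter.Tendsto (slope (fun t => g x (Function.update q i t)) (q i))
        (nhdsWithin (q i) (Set.Ioi (q i))) (nhds (gq x q i)) :=
      htend.mono_left (nhdsWithin_mono _ (fun t ht => ne_of_gt ht))
    refine ge_of_tendsto htend' ?_
    filter_upwards [self_mem_nhdsWithin] with t ht
    rw [slope_def_field]
    apply div_nonneg
    · have := mono (q i) t (le_of_lt ht)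
      linarith
    · have : q i < t := ht
      linarith
  exact ⟨key 0 (fun s t hst => (hg1 x q s t hst).1),
    key' 1 (fun s t hst => (hg1 x q s t hst).2.2.1),
    key 2 (fun s t hst => (hg1 x q s t hst).2.1),
    key' 3 (fun s t hst => (hg1 x q s t hst).2.2.2)⟩

lemma dot4_eq_sum (p q : Fin 4 → ℝ) : dot4 p q = ∑ i : Fin 4, p i * q i := by
  rw [Fin.sum_univ_four]; rfl

/-- the convexity gradient inequality for `g` -/
lemma grad_ineq {g : Torus → (Fin 4 → ℝ) → ℝ} {gq : Torus → (Fin 4 → ℝ) → (Fin 4 → ℝ)}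
    (hg3 : Hg3 g gq) (hg4 : Hg4 g) (x : Torus) (q q' : Fin 4 → ℝ) :
    g x q + dot4 (gq x q) (fun t => q' t - q t) ≤ g x q' := by
  have hdiff : DifferentiableAt ℝ (g x) q :=
    ((hg3.2.1 x).differentiable one_ne_zero).differentiableAt
  have hf' : HasFDerivAt (g x) (fderiv ℝ (g x) q) q := hdiff.hasFDerivAt
  set f' := fderiv ℝ (g x) q with hf'def
  -- partial derivatives of g coincide with gq
  have hpart : ∀ i : Fin 4, f' (Pi.single i 1) = gq x q i := by
    intro i
    have hline : (fun t : ℝ => Function.update q i t)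
        = fun t : ℝ => q + (t - q i) • (Pi.single i (1:ℝ) : Fin 4 → ℝ) := by
      funext t j
      by_cases h : j = i
      · subst h; simp
      · simp [Function.update_of_ne h, Pi.single_eq_of_ne h]
    have hinner : HasDerivAt (fun t : ℝ => q + (t - q i) • (Pi.single i (1:ℝ) : Fin 4 → ℝ))
        ((Pi.single i (1:ℝ) : Fin 4 → ℝ)) (q i) := by
      have h1 : HasDerivAt (fun t : ℝ => t - q i) 1 (q i) :=
        (hasDerivAt_id (q i)).sub_const (q i)
      have h2 := h1.smul_const (Pi.single i (1:ℝ) : Fin 4 → ℝ)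
      simpa using h2.const_add q
    have hf'' : HasFDerivAt (g x) f'
        (q + ((q i) - q i) • (Pi.single i (1:ℝ) : Fin 4 → ℝ)) := by simpa using hf'
    have hcomp : HasDerivAt (fun t : ℝ => g x (q + (t - q i) • (Pi.single i (1:ℝ) : Fin 4 → ℝ)))
        (f' (Pi.single i 1)) (q i) := hf''.comp_hasDerivAt (q i) hinner
    have hgiven : HasDerivAt (fun t => g x (Function.update q i t)) (gq x q i) (q i) :=
      hg3.2.2 x q i
    have hfun : (fun t : ℝ => g x (Function.update q i t))
        = (fun t : ℝ => g x (q + (t - q i) • (Pi.single i (1:ℝ) : Fin 4 → ℝ))) := by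
      funext t; rw [congrFun hline t]
    rw [hfun] at hgiven
    exact hcomp.unique hgiven
  have hdot : ∀ p : Fin 4 → ℝ, f' p = dot4 (gq x q) p := by
    intro p
    have hp : p = ∑ i : Fin 4, (p i) • (Pi.single i (1:ℝ) : Fin 4 → ℝ) := by
      funext j
      rw [Finset.sum_apply]
      rw [Fin.sum_univ_four]
      fin_cases j <;> simp [Pi.single_apply]
    rw [dot4_eq_sum]
    conv_lhs => rw [hp]
    rw [map_sum]
    apply Finset.sum_congr rfl
    intro i _
    rw [map_smul, hpart i]
    simp [mul_comm]
  -- 1-d reduction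
  set φ : ℝ → ℝ := fun t => g x (q + t • (q' - q)) with hφ
  have hφ0 : φ 0 = g x q := by simp [hφ]
  have hφ1 : φ 1 = g x q' := by simp [hφ]
  have hφconv : ConvexOn ℝ Set.univ φ := by
    constructor
    · exact convex_univ
    · intro p _ r _ sa sb hsa hsb hsum
      have key := (hg4 x).2 (Set.mem_univ (q + p • (q' - q))) (Set.mem_univ (q + r • (q' - q)))
        hsa hsb hsum
      have harg : sa • (q + p • (q' - q)) + sb • (q + r • (q' - q))
          = q + (sa • p + sb • r) • (q' - q) := by
        funext j
        simp only [Pi.add_apply, Pi.smul_apply, Pi.sub_apply, smul_eq_mul]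
        linear_combination q j * hsum
      rw [harg] at key
      simp only [smul_eq_mul] at key ⊢
      exact key
  have hφd : HasDerivAt φ (f' (q' - q)) 0 := by
    have hinner : HasDerivAt (fun t : ℝ => q + t • (q' - q)) (q' - q) 0 := by
      have h2 := (hasDerivAt_id (0:ℝ)).smul_const (q' - q)
      simpa using h2.const_add q
    have hf'0 : HasFDerivAt (g x) f' (q + (0:ℝ) • (q' - q)) := by simpa using hf'
    exact hf'0.comp_hasDerivAt (0:ℝ) hinner
  have hslope : f' (q' - q) ≤ slope φ 0 1 :=
    ConvexOn.le_slope_of_hasDerivWithinAt_Ioi hφconv (Set.mem_univ 0) (Set.mem_univ 1)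
      one_pos (hφd.hasDerivWithinAt)
  rw [slope_def_field] at hslope
  have : f' (q' - q) ≤ g x q' - g x q := by
    rw [hφ0, hφ1] at hslope
    simpa using hslope
  have heq : f' (q' - q) = dot4 (gq x q) (fun t => q' t - q t) := by
    rw [hdot (q' - q)]; rfl
  linarith [heq ▸ this]

/-- chained monotonicity of g from (g1) -/
lemma g_chain {g : Torus → (Fin 4 → ℝ) → ℝ} (hg1 : Hg1 g) (x : Torus)
    (q q' : Fin 4 → ℝ) (h0 : q' 0 ≤ q 0) (h1 : q 1 ≤ q' 1) (h2 : q' 2 ≤ q 2)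
    (h3 : q 3 ≤ q' 3) : g x q ≤ g x q' := by
  set q1 := Function.update q 0 (q' 0) with hq1
  set q2 := Function.update q1 1 (q' 1) with hq2
  set q3 := Function.update q2 2 (q' 2) with hq3
  have e1 : q1 1 = q 1 := by rw [hq1]; simp [Function.update]
  have e2 : q2 2 = q 2 := by rw [hq2, hq1]; simp [Function.update]
  have e3 : q3 3 = q 3 := by rw [hq3, hq2, hq1]; simp [Function.update]
  have s1 : g x q ≤ g x q1 := by
    have := (hg1 x q (q' 0) (q 0) h0).1
    rwa [Function.update_eq_self] at this
  have s2 : g x q1 ≤ g x q2 := by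
    have := (hg1 x q1 (q1 1) (q' 1) (by rw [e1]; exact h1)).2.2.1
    rwa [Function.update_eq_self] at this
  have s3 : g x q2 ≤ g x q3 := by
    have := (hg1 x q2 (q' 2) (q2 2)  (by rw [e2]; exact h2)).2.1
    rwa [Function.update_eq_self] at this
  have s4 : g x q3 ≤ g x q' := by
    have := (hg1 x q3 (q3 3) (q' 3) (by rw [e3]; exact h3)).2.2.2
    rw [Function.update_eq_self] at this
    have hfin : Function.update q3 3 (q' 3) = q' := by
      funext t
      fin_cases t <;> simp [hq3, hq2, hq1, Function.update]
    rwa [hfin] at this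
  linarith

lemma nablah_sub_apply (u u' : ZMod N → ZMod N → ℝ) (i j : ZMod N) (t : Fin 4) :
    nablah (fun a b => u a b - u' a b) i j t = nablah u i j t - nablah u' i j t := by
  fin_cases t <;>
    simp [nablah, D1, D2, sub_div, Matrix.cons_val_zero, Matrix.cons_val_one,
      Matrix.head_cons] <;> ring

/-- pointwise convexity estimate -/
lemma pointwise_conv {g : Torus → (Fin 4 → ℝ) → ℝ} {gq : Torus → (Fin 4 → ℝ) → (Fin 4 → ℝ)}
    (hg3 : Hg3 g gq) (hg4 : Hg4 g) (x : Torus)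
    (qU qU' : Fin 4 → ℝ) (a b : ℝ) (ha : 0 ≤ a) (hb : 0 ≤ b) (dw : Fin 4 → ℝ)
    (hdw : ∀ t, dw t = qU t - qU' t) :
    (g x qU - g x qU') * (a - b) - a * dot4 (gq x qU) dw + b * dot4 (gq x qU') dw ≤ 0 := by
  have h1 := grad_ineq hg3 hg4 x qU qU'
  have h2 := grad_ineq hg3 hg4 x qU' qU
  simp only [dot4] at h1 h2 ⊢
  rw [hdw 0, hdw 1, hdw 2, hdw 3]
  have hA : a * ((g x qU - g x qU') - (gq x qU 0 * (qU 0 - qU' 0) + gq x qU 1 * (qU 1 - qU' 1)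
      + gq x qU 2 * (qU 2 - qU' 2) + gq x qU 3 * (qU 3 - qU' 3))) ≤ 0 := by
    apply mul_nonpos_of_nonneg_of_nonpos ha
    linarith
  have hB : b * ((g x qU' - g x qU) + (gq x qU' 0 * (qU 0 - qU' 0) + gq x qU' 1 * (qU 1 - qU' 1)
      + gq x qU' 2 * (qU 2 - qU' 2) + gq x qU' 3 * (qU 3 - qU' 3))) ≤ 0 := by
    apply mul_nonpos_of_nonneg_of_nonpos hb
    linarith
  nlinarith [hA, hB]

/-- one-sided comparison for the implicit Bellman step -/
lemma bellman_step_le {g : Torus → (Fin 4 → ℝ) → ℝ} (hg1 : Hg1 g) {Δt ν : ℝ}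
    (hΔt : 0 < Δt) (hν : 0 < ν) (v v' : ZMod N → ZMod N → ℝ)
    (heq : ∀ i j, v i j - Δt * ν * laph v i j + Δt * g (gridPt N i j) (nablah v i j)
      = v' i j - Δt * ν * laph v' i j + Δt * g (gridPt N i j) (nablah v' i j)) :
    ∀ i j, v i j ≤ v' i j := by
  obtain ⟨⟨i0, j0⟩, hmax⟩ :=
    Finite.exists_max (fun p : ZMod N × ZMod N => v p.1 p.2 - v' p.1 p.2)
  set d : ZMod N → ZMod N → ℝ := fun i j => v i j - v' i j with hd
  have hmax' : ∀ i j, d i j ≤ d i0 j0 := fun i j => hmax (i, j)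
  have hh : (0:ℝ) < gridh N := gridh_pos
  have hlap : laph v i0 j0 - laph v' i0 j0 ≤ 0 := by
    have he : laph v i0 j0 - laph v' i0 j0
        = (d (i0+1) j0 + d (i0-1) j0 + d i0 (j0+1) + d i0 (j0-1) - 4 * d i0 j0)
          / (gridh N)^2 := by
      unfold laph; simp only [hd]; ring
    rw [he]
    apply div_nonpos_of_nonpos_of_nonneg _ (by positivity)
    have h1 := hmax' (i0+1) j0
    have h2 := hmax' (i0-1) j0
    have h3 := hmax' i0 (j0+1)
    have h4 := hmax' i0 (j0-1)
    linarith
  have hgineq : g (gridPt N i0 j0) (nablah v' i0 j0) ≤ g (gridPt N i0 j0) (nablah v i0 j0) := by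
    apply g_chain hg1
    · simp only [nablah_zero]
      have he : D1 v i0 j0 - D1 v' i0 j0 = (d (i0+1) j0 - d i0 j0) / gridh N := by
        unfold D1; simp only [hd]; ring
      have := div_nonpos_of_nonpos_of_nonneg (sub_nonpos.mpr (hmax' (i0+1) j0)) hh.le
      linarith [he ▸ this]
    · simp only [nablah_one]
      have he : D1 v (i0-1) j0 - D1 v' (i0-1) j0 = (d i0 j0 - d (i0-1) j0) / gridh N := by
        unfold D1; simp only [hd, sub_add_cancel]; ring
      have := div_nonneg (sub_nonneg.mpr (hmax' (i0-1) j0)) hh.le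
      linarith [he ▸ this]
    · simp only [nablah_two]
      have he : D2 v i0 j0 - D2 v' i0 j0 = (d i0 (j0+1) - d i0 j0) / gridh N := by
        unfold D2; simp only [hd]; ring
      have := div_nonpos_of_nonpos_of_nonneg (sub_nonpos.mpr (hmax' i0 (j0+1))) hh.le
      linarith [he ▸ this]
    · simp only [nablah_three]
      have he : D2 v i0 (j0-1) - D2 v' i0 (j0-1) = (d i0 j0 - d i0 (j0-1)) / gridh N := by
        unfold D2; simp only [hd, sub_add_cancel]; ring
      have := div_nonneg (sub_nonneg.mpr (hmax' i0 (j0-1))) hh.le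
      linarith [he ▸ this]
  have hd0 : d i0 j0 ≤ 0 := by
    have h0 := heq i0 j0
    have e1 := mul_nonpos_of_nonneg_of_nonpos (mul_nonneg hΔt.le hν.le) hlap
    have e2 := mul_nonneg hΔt.le (sub_nonneg.mpr hgineq)
    simp only [hd]
    nlinarith [h0, e1, e2]
  intro i j
  have := hmax' i j
  simp only [hd] at this hd0
  linarith

/-- uniqueness for the implicit Bellman step -/
lemma bellman_step_unique {g : Torus → (Fin 4 → ℝ) → ℝ} (hg1 : Hg1 g) {Δt ν : ℝ}
    (hΔt : 0 < Δt) (hν : 0 < ν) (v v' : ZMod N → ZMod N → ℝ)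
    (heq : ∀ i j, v i j - Δt * ν * laph v i j + Δt * g (gridPt N i j) (nablah v i j)
      = v' i j - Δt * ν * laph v' i j + Δt * g (gridPt N i j) (nablah v' i j)) :
    v = v' := by
  funext i j
  exact le_antisymm (bellman_step_le hg1 hΔt hν v v' heq i j)
    (bellman_step_le hg1 hΔt hν v' v (fun i j => (heq i j).symm) i j)

lemma gsum_zero : gsum (fun _ _ => (0:ℝ) : ZMod N → ZMod N → ℝ) = 0 := by simp [gsum]

/-- the adjoint operator of the linearized implicit FP step -/
def Bop (Δt ν : ℝ) (α : ZMod N → ZMod N → Fin 4 → ℝ) :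
    (ZMod N → ZMod N → ℝ) →ₗ[ℝ] (ZMod N → ZMod N → ℝ) where
  toFun v := fun i j => v i j - Δt * ν * laph v i j + Δt * dot4 (α i j) (nablah v i j)
  map_add' v w := by
    funext i j
    simp only [Pi.add_apply, dot4, nablah_zero, nablah_one, nablah_two, nablah_three]
    unfold laph D1 D2
    simp only [Pi.add_apply]
    ring
  map_smul' c v := by
    funext i j
    simp only [Pi.smul_apply, smul_eq_mul, RingHom.id_apply, dot4, nablah_zero,
      nablah_one, nablah_two, nablah_three]
    unfold laph D1 D2
    simp only [Pi.smul_apply, smul_eq_mul]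
    ring

@[simp] lemma Bop_apply (Δt ν : ℝ) (α : ZMod N → ZMod N → Fin 4 → ℝ)
    (v : ZMod N → ZMod N → ℝ) (i j : ZMod N) :
    Bop Δt ν α v i j = v i j - Δt * ν * laph v i j + Δt * dot4 (α i j) (nablah v i j) := rfl

lemma Bop_le {Δt ν : ℝ} (hΔt : 0 < Δt) (hν : 0 < ν)
    (α : ZMod N → ZMod N → Fin 4 → ℝ)
    (hα : ∀ i j, α i j 0 ≤ 0 ∧ 0 ≤ α i j 1 ∧ α i j 2 ≤ 0 ∧ 0 ≤ α i j 3)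
    (v : ZMod N → ZMod N → ℝ) (hv : Bop Δt ν α v = 0) : ∀ i j, v i j ≤ 0 := by
  obtain ⟨⟨i0, j0⟩, hmax⟩ := Finite.exists_max (fun p : ZMod N × ZMod N => v p.1 p.2)
  have hmax' : ∀ i j, v i j ≤ v i0 j0 := fun i j => hmax (i, j)
  have hh : (0:ℝ) < gridh N := gridh_pos
  have hlap : laph v i0 j0 ≤ 0 := by
    have he : laph v i0 j0
        = (v (i0+1) j0 + v (i0-1) j0 + v i0 (j0+1) + v i0 (j0-1) - 4 * v i0 j0)
          / (gridh N)^2 := by unfold laph; ring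
    rw [he]
    apply div_nonpos_of_nonpos_of_nonneg _ (by positivity)
    have h1 := hmax' (i0+1) j0
    have h2 := hmax' (i0-1) j0
    have h3 := hmax' i0 (j0+1)
    have h4 := hmax' i0 (j0-1)
    linarith
  have hdot : 0 ≤ dot4 (α i0 j0) (nablah v i0 j0) := by
    obtain ⟨ha0, ha1, ha2, ha3⟩ := hα i0 j0
    have d0 : D1 v i0 j0 ≤ 0 :=
      div_nonpos_of_nonpos_of_nonneg (sub_nonpos.mpr (hmax' (i0+1) j0)) hh.le
    have d1 : 0 ≤ D1 v (i0-1) j0 := by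
      unfold D1
      rw [sub_add_cancel]
      exact div_nonneg (sub_nonneg.mpr (hmax' (i0-1) j0)) hh.le
    have d2 : D2 v i0 j0 ≤ 0 :=
      div_nonpos_of_nonpos_of_nonneg (sub_nonpos.mpr (hmax' i0 (j0+1))) hh.le
    have d3 : 0 ≤ D2 v i0 (j0-1) := by
      unfold D2
      rw [sub_add_cancel]
      exact div_nonneg (sub_nonneg.mpr (hmax' i0 (j0-1))) hh.le
    unfold dot4
    simp only [nablah_zero, nablah_one, nablah_two, nablah_three]
    have p0 : (0:ℝ) ≤ α i0 j0 0 * D1 v i0 j0 := by nlinarith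
    have p1 := mul_nonneg ha1 d1
    have p2 : (0:ℝ) ≤ α i0 j0 2 * D2 v i0 j0 := by nlinarith
    have p3 := mul_nonneg ha3 d3
    linarith
  have h0 : Bop Δt ν α v i0 j0 = 0 := by rw [hv]; rfl
  rw [Bop_apply] at h0
  have e1 := mul_nonpos_of_nonneg_of_nonpos (mul_nonneg hΔt.le hν.le) hlap
  have e2 := mul_nonneg hΔt.le hdot
  intro i j
  have := hmax' i j
  nlinarith [h0, e1, e2]

lemma Bop_injective {Δt ν : ℝ} (hΔt : 0 < Δt) (hν : 0 < ν)
    (α : ZMod N → ZMod N → Fin 4 → ℝ)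
    (hα : ∀ i j, α i j 0 ≤ 0 ∧ 0 ≤ α i j 1 ∧ α i j 2 ≤ 0 ∧ 0 ≤ α i j 3) :
    Function.Injective (Bop (N := N) Δt ν α) := by
  intro a b hab
  have hz : Bop Δt ν α (a - b) = 0 := by rw [map_sub, hab, sub_self]
  have h1 := Bop_le hΔt hν α hα (a - b) hz
  have hz' : Bop Δt ν α (-(a - b)) = 0 := by rw [map_neg, hz, neg_zero]
  have h2 := Bop_le hΔt hν α hα (-(a - b)) hz'
  funext i j
  have e1 := h1 i j
  have e2 := h2 i j
  simp only [Pi.neg_apply, Pi.sub_apply] at e1 e2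
  linarith

/-- pointwise linearity of `Transp` in `m` -/
lemma transp_sub (gq : Torus → (Fin 4 → ℝ) → (Fin 4 → ℝ)) (u m m' : ZMod N → ZMod N → ℝ)
    (i j : ZMod N) :
    Transp gq u m i j - Transp gq u m' i j
      = Transp gq u (fun a b => m a b - m' a b) i j := by
  unfold Transp; ring

/-- uniqueness (backward) for the implicit FP step -/
lemma fp_step_unique {gq : Torus → (Fin 4 → ℝ) → (Fin 4 → ℝ)} {Δt ν : ℝ}
    (hΔt : 0 < Δt) (hν : 0 < ν) (u : ZMod N → ZMod N → ℝ)
    (hsign : ∀ i j, gq (gridPt N i j) (nablah u i j) 0 ≤ 0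
      ∧ 0 ≤ gq (gridPt N i j) (nablah u i j) 1
      ∧ gq (gridPt N i j) (nablah u i j) 2 ≤ 0
      ∧ 0 ≤ gq (gridPt N i j) (nablah u i j) 3)
    (μ : ZMod N → ZMod N → ℝ)
    (hμ : ∀ i j, μ i j = Δt * (ν * laph μ i j + Transp gq u μ i j)) :
    ∀ i j, μ i j = 0 := by
  set α : ZMod N → ZMod N → Fin 4 → ℝ := fun i j => gq (gridPt N i j) (nablah u i j) with hαdef
  have hinj := Bop_injective (N := N) hΔt hν α (fun i j => hsign i j)
  have hsurj : Function.Surjective (Bop (N := N) Δt ν α) :=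
    LinearMap.injective_iff_surjective.mp hinj
  obtain ⟨v, hvB⟩ := hsurj μ
  have key : gsum (fun i j => μ i j * μ i j) = 0 := by
    calc gsum (fun i j => μ i j * μ i j)
        = gsum (fun i j => μ i j * Bop Δt ν α v i j) :=
          gsum_congr (fun i j => by rw [hvB])
      _ = gsum (fun i j => μ i j * v i j
            - Δt * ν * (μ i j * laph v i j) + Δt * (μ i j * dot4 (α i j) (nablah v i j))) :=
          gsum_congr (fun i j => by rw [Bop_apply]; ring)
      _ = gsum (fun i j => μ i j * v i j) - Δt * ν * gsum (fun i j => μ i j * laph v i j)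
            + Δt * gsum (fun i j => μ i j * dot4 (α i j) (nablah v i j)) := by
          rw [gsum_add, gsum_sub, gsum_smul, gsum_smul]
      _ = gsum (fun i j => μ i j * v i j) - Δt * ν * gsum (fun i j => laph μ i j * v i j)
            - Δt * gsum (fun i j => Transp gq u μ i j * v i j) := by
          rw [laph_symm μ v]
          rw [show gsum (fun i j => μ i j * dot4 (α i j) (nablah v i j))
              = - gsum (fun i j => Transp gq u μ i j * v i j) from
            (neg_eq_iff_eq_neg.mpr (transp_adjoint gq u μ v)).symm ▸ rfl]
          ring
      _ = gsum (fun i j => (μ i j - Δt * (ν * laph μ i j + Transp gq u μ i j)) * v i j) := by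
          rw [show (fun i j => (μ i j - Δt * (ν * laph μ i j + Transp gq u μ i j)) * v i j)
              = fun i j => μ i j * v i j - Δt * ν * (laph μ i j * v i j)
                  - Δt * (Transp gq u μ i j * v i j) from
            funext fun i => funext fun j => by ring]
          rw [gsum_sub, gsum_sub, gsum_smul, gsum_smul]
      _ = gsum (fun _ _ => (0:ℝ)) := gsum_congr (fun i j => by rw [← hμ i j]; ring)
      _ = 0 := gsum_zero
  intro i j
  have := gsum_eq_zero (fun i j => mul_self_nonneg (μ i j)) key i j
  exact mul_self_eq_zero.mp this


lemma laph_sub_point (v v' : ZMod N → ZMod N → ℝ) (i j : ZMod N) :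
    laph v i j - laph v' i j = laph (fun a b => v a b - v' a b) i j := by
  simp only [laph]; ring

end MFGaux

open MFGaux

/-- Uniqueness for the discrete MFG system.
Under (g1)–(g4), if `F` is continuous and nondecreasing, then two solutions of the
discrete MFG system with the same initial data `u⁰` and the same terminal data
`m^{N_T} ∈ 𝒦_h`, both with `m^k ∈ 𝒦_h` for all `k`, coincide. -/
theorem discrete_MFG_uniqueness (N NT : ℕ) [NeZero N] (hNT : 0 < NT)
    (T ν : ℝ) (hT : 0 < T) (hν : 0 < ν)
    (g : Torus → (Fin 4 → ℝ) → ℝ) (gq : Torus → (Fin 4 → ℝ) → (Fin 4 → ℝ))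
    (H : Torus → ℝ × ℝ → ℝ)
    (hg1 : Hg1 g) (hg2 : Hg2 g H) (hg3 : Hg3 g gq) (hg4 : Hg4 g)
    (F : ℝ → ℝ) (hFc : ContinuousOn F (Set.Ici 0)) (hFmono : MonotoneOn F (Set.Ici 0))
    (u m u' m' : ℕ → ZMod N → ZMod N → ℝ)
    (hu0 : u 0 = u' 0) (hmT : m NT = m' NT) (hmTK : inKh (m NT))
    (hsys : BellmanEq g ν (T / NT) F u m NT ∧ FPEq gq ν (T / NT) u m NT ∧
      ∀ k ≤ NT, inKh (m k))
    (hsys' : BellmanEq g ν (T / NT) F u' m' NT ∧ FPEq gq ν (T / NT) u' m' NT ∧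
      ∀ k ≤ NT, inKh (m' k)) :
    ∀ n ≤ NT, u n = u' n ∧ m n = m' n := by
  classical
  obtain ⟨hBel, hFPe, hKm⟩ := hsys
  obtain ⟨hBel', hFPe', hKm'⟩ := hsys'
  have hΔt : 0 < T / (NT:ℝ) := div_pos hT (by exact_mod_cast hNT)
  set Δt : ℝ := T / (NT:ℝ) with hΔtdef
  have hne : Δt ≠ 0 := ne_of_gt hΔt
  -- cleared-denominator versions of the four equations
  have e1' : ∀ k, k < NT → ∀ i j, u (k+1) i j - u k i j
      = (F (m k i j) + ν * laph (u (k+1)) i j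
          - g (gridPt N i j) (nablah (u (k+1)) i j)) * Δt := by
    intro k hk i j
    have e1 := hBel k hk i j
    rw [← div_eq_iff hne]
    linarith
  have e2' : ∀ k, k < NT → ∀ i j, u' (k+1) i j - u' k i j
      = (F (m' k i j) + ν * laph (u' (k+1)) i j
          - g (gridPt N i j) (nablah (u' (k+1)) i j)) * Δt := by
    intro k hk i j
    have e2 := hBel' k hk i j
    rw [← div_eq_iff hne]
    linarith
  have e3' : ∀ k, k < NT → ∀ i j, m (k+1) i j - m k i j
      = (-(ν * laph (m k) i j) - Transp gq (u (k+1)) (m k) i j) * Δt := by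
    intro k hk i j
    have e3 := hFPe k hk i j
    rw [← div_eq_iff hne]
    linarith
  have e4' : ∀ k, k < NT → ∀ i j, m' (k+1) i j - m' k i j
      = (-(ν * laph (m' k) i j) - Transp gq (u' (k+1)) (m' k) i j) * Δt := by
    intro k hk i j
    have e4 := hFPe' k hk i j
    rw [← div_eq_iff hne]
    linarith
  -- energy quantities
  set c : ℕ → ℝ := fun n => gsum (fun i j => (u n i j - u' n i j) * (m n i j - m' n i j))
    with hc
  set SF : ℕ → ℝ := fun k =>
    gsum (fun i j => (F (m k i j) - F (m' k i j)) * (m k i j - m' k i j)) with hSF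
  set TM : ℕ → ℝ := fun k => gsum (fun i j =>
      (g (gridPt N i j) (nablah (u (k+1)) i j)
        - g (gridPt N i j) (nablah (u' (k+1)) i j)) * (m k i j - m' k i j)
      - m k i j * dot4 (gq (gridPt N i j) (nablah (u (k+1)) i j))
          (nablah (fun a b => u (k+1) a b - u' (k+1) a b) i j)
      + m' k i j * dot4 (gq (gridPt N i j) (nablah (u' (k+1)) i j))
          (nablah (fun a b => u (k+1) a b - u' (k+1) a b) i j)) with hTM
  -- Step A : convexity estimate
  have claimA : ∀ k, k < NT → TM k ≤ 0 := by
    intro k hk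
    simp only [hTM]
    apply gsum_nonpos
    intro i j
    exact pointwise_conv hg3 hg4 (gridPt N i j) (nablah (u (k+1)) i j)
      (nablah (u' (k+1)) i j) (m k i j) (m' k i j)
      ((hKm k hk.le).1 i j) ((hKm' k hk.le).1 i j)
      (nablah (fun a b => u (k+1) a b - u' (k+1) a b) i j)
      (fun t => nablah_sub_apply (u (k+1)) (u' (k+1)) i j t)
  -- Step B : the energy identity
  have claimB : ∀ k, k < NT → Δt * SF k = Δt * TM k + (c (k+1) - c k) := by
    intro k hk
    have P : ∀ i j, Δt * ((F (m k i j) - F (m' k i j)) * (m k i j - m' k i j))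
        = Δt * ((g (gridPt N i j) (nablah (u (k+1)) i j)
              - g (gridPt N i j) (nablah (u' (k+1)) i j)) * (m k i j - m' k i j))
          + Δt * (Transp gq (u (k+1)) (m k) i j * (u (k+1) i j - u' (k+1) i j))
          - Δt * (Transp gq (u' (k+1)) (m' k) i j * (u (k+1) i j - u' (k+1) i j))
          + ((u (k+1) i j - u' (k+1) i j) * (m (k+1) i j - m' (k+1) i j)
              - (u k i j - u' k i j) * (m k i j - m' k i j))
          + Δt * ν * (laph (m k) i j * (u (k+1) i j - u' (k+1) i j))
          - Δt * ν * (laph (m' k) i j * (u (k+1) i j - u' (k+1) i j))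
          - Δt * ν * (laph (u (k+1)) i j * (m k i j - m' k i j))
          + Δt * ν * (laph (u' (k+1)) i j * (m k i j - m' k i j)) := by
      intro i j
      linear_combination (m' k i j - m k i j) * e1' k hk i j
        + (m k i j - m' k i j) * e2' k hk i j
        + (u' (k+1) i j - u (k+1) i j) * e3' k hk i j
        + (u (k+1) i j - u' (k+1) i j) * e4' k hk i j
    have Hsplit : Δt * SF k
        = Δt * gsum (fun i j => (g (gridPt N i j) (nablah (u (k+1)) i j)
              - g (gridPt N i j) (nablah (u' (k+1)) i j)) * (m k i j - m' k i j))
          + Δt * gsum (fun i j => Transp gq (u (k+1)) (m k) i j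
              * (u (k+1) i j - u' (k+1) i j))
          - Δt * gsum (fun i j => Transp gq (u' (k+1)) (m' k) i j
              * (u (k+1) i j - u' (k+1) i j))
          + (gsum (fun i j => (u (k+1) i j - u' (k+1) i j)
              * (m (k+1) i j - m' (k+1) i j))
            - gsum (fun i j => (u k i j - u' k i j) * (m k i j - m' k i j)))
          + Δt * ν * gsum (fun i j => laph (m k) i j * (u (k+1) i j - u' (k+1) i j))
          - Δt * ν * gsum (fun i j => laph (m' k) i j * (u (k+1) i j - u' (k+1) i j))
          - Δt * ν * gsum (fun i j => laph (u (k+1)) i j * (m k i j - m' k i j))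
          + Δt * ν * gsum (fun i j => laph (u' (k+1)) i j * (m k i j - m' k i j)) := by
      simp only [hSF]
      rw [← gsum_smul]
      rw [show (fun i j => Δt * ((F (m k i j) - F (m' k i j)) * (m k i j - m' k i j)))
          = (fun i j =>
            Δt * ((g (gridPt N i j) (nablah (u (k+1)) i j)
                - g (gridPt N i j) (nablah (u' (k+1)) i j)) * (m k i j - m' k i j))
            + Δt * (Transp gq (u (k+1)) (m k) i j * (u (k+1) i j - u' (k+1) i j))
            - Δt * (Transp gq (u' (k+1)) (m' k) i j * (u (k+1) i j - u' (k+1) i j))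
            + ((u (k+1) i j - u' (k+1) i j) * (m (k+1) i j - m' (k+1) i j)
                - (u k i j - u' k i j) * (m k i j - m' k i j))
            + Δt * ν * (laph (m k) i j * (u (k+1) i j - u' (k+1) i j))
            - Δt * ν * (laph (m' k) i j * (u (k+1) i j - u' (k+1) i j))
            - Δt * ν * (laph (u (k+1)) i j * (m k i j - m' k i j))
            + Δt * ν * (laph (u' (k+1)) i j * (m k i j - m' k i j)))
          from funext fun i => funext fun j => P i j]
      simp only [gsum_add, gsum_sub, gsum_smul]
    -- adjoint identities
    have R2 : gsum (fun i j => Transp gq (u (k+1)) (m k) i j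
          * (u (k+1) i j - u' (k+1) i j))
        = - gsum (fun i j => m k i j * dot4 (gq (gridPt N i j) (nablah (u (k+1)) i j))
            (nablah (fun a b => u (k+1) a b - u' (k+1) a b) i j)) := by
      rw [← transp_adjoint gq (u (k+1)) (m k) (fun a b => u (k+1) a b - u' (k+1) a b)]
    have R3 : gsum (fun i j => Transp gq (u' (k+1)) (m' k) i j
          * (u (k+1) i j - u' (k+1) i j))
        = - gsum (fun i j => m' k i j * dot4 (gq (gridPt N i j) (nablah (u' (k+1)) i j))
            (nablah (fun a b => u (k+1) a b - u' (k+1) a b) i j)) := by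
      rw [← transp_adjoint gq (u' (k+1)) (m' k) (fun a b => u (k+1) a b - u' (k+1) a b)]
    -- the cross Laplacian terms cancel
    have Hcross : gsum (fun i j => laph (m k) i j * (u (k+1) i j - u' (k+1) i j))
          - gsum (fun i j => laph (m' k) i j * (u (k+1) i j - u' (k+1) i j))
          - gsum (fun i j => laph (u (k+1)) i j * (m k i j - m' k i j))
          + gsum (fun i j => laph (u' (k+1)) i j * (m k i j - m' k i j)) = 0 := by
      have h1 : gsum (fun i j => laph (m k) i j * (u (k+1) i j - u' (k+1) i j))
            - gsum (fun i j => laph (m' k) i j * (u (k+1) i j - u' (k+1) i j))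
          = gsum (fun i j => laph (fun a b => m k a b - m' k a b) i j
              * ((fun a b => u (k+1) a b - u' (k+1) a b) i j)) := by
        rw [← gsum_sub]
        exact gsum_congr (fun i j => by rw [← laph_sub_point]; ring)
      have h2 : gsum (fun i j => laph (u (k+1)) i j * (m k i j - m' k i j))
            - gsum (fun i j => laph (u' (k+1)) i j * (m k i j - m' k i j))
          = gsum (fun i j => laph (fun a b => u (k+1) a b - u' (k+1) a b) i j
              * ((fun a b => m k a b - m' k a b) i j)) := by
        rw [← gsum_sub]
        exact gsum_congr (fun i j => by rw [← laph_sub_point]; ring)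
      have h3 := laph_symm (fun a b => m k a b - m' k a b)
        (fun a b => u (k+1) a b - u' (k+1) a b)
      have h4 : gsum (fun i j => (fun a b => m k a b - m' k a b) i j
            * laph (fun a b => u (k+1) a b - u' (k+1) a b) i j)
          = gsum (fun i j => laph (fun a b => u (k+1) a b - u' (k+1) a b) i j
              * ((fun a b => m k a b - m' k a b) i j)) :=
        gsum_congr (fun i j => mul_comm _ _)
      linarith
    have HTM : TM k = gsum (fun i j => (g (gridPt N i j) (nablah (u (k+1)) i j)
          - g (gridPt N i j) (nablah (u' (k+1)) i j)) * (m k i j - m' k i j))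
        - gsum (fun i j => m k i j * dot4 (gq (gridPt N i j) (nablah (u (k+1)) i j))
            (nablah (fun a b => u (k+1) a b - u' (k+1) a b) i j))
        + gsum (fun i j => m' k i j * dot4 (gq (gridPt N i j) (nablah (u' (k+1)) i j))
            (nablah (fun a b => u (k+1) a b - u' (k+1) a b) i j)) := by
      simp only [hTM, gsum_add, gsum_sub]
    have hck1 : c (k+1) = gsum (fun i j => (u (k+1) i j - u' (k+1) i j)
        * (m (k+1) i j - m' (k+1) i j)) := by simp only [hc]
    have hck : c k = gsum (fun i j => (u k i j - u' k i j) * (m k i j - m' k i j)) := by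
      simp only [hc]
    linear_combination Hsplit - Δt * HTM + Δt * R2 - Δt * R3 + Δt * ν * Hcross - hck1 + hck
  -- telescoping and positivity
  have hcNT : c NT = 0 := by
    simp only [hc]
    rw [show (fun i j => (u NT i j - u' NT i j) * (m NT i j - m' NT i j))
        = (fun _ _ => (0:ℝ)) from funext fun i => funext fun j => by rw [hmT]; ring]
    exact gsum_zero
  have hc0 : c 0 = 0 := by
    simp only [hc]
    rw [show (fun i j => (u 0 i j - u' 0 i j) * (m 0 i j - m' 0 i j))
        = (fun _ _ => (0:ℝ)) from funext fun i => funext fun j => by rw [hu0]; ring]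
    exact gsum_zero
  have tele : ∑ k ∈ Finset.range NT, (c (k+1) - c k) = c NT - c 0 :=
    Finset.sum_range_sub c NT
  have sum_eq : ∑ k ∈ Finset.range NT, (Δt * SF k)
      = ∑ k ∈ Finset.range NT, (Δt * TM k) := by
    have : ∑ k ∈ Finset.range NT, (Δt * SF k)
        = ∑ k ∈ Finset.range NT, (Δt * TM k + (c (k+1) - c k)) :=
      Finset.sum_congr rfl (fun k hk => claimB k (Finset.mem_range.mp hk))
    rw [this, Finset.sum_add_distrib, tele, hcNT, hc0]
    ring
  have hFprod : ∀ a b : ℝ, 0 ≤ a → 0 ≤ b → 0 ≤ (F a - F b) * (a - b) := by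
    intro a b ha hb
    rcases le_total a b with h | h
    · have := hFmono (Set.mem_Ici.mpr ha) (Set.mem_Ici.mpr hb) h
      nlinarith
    · have := hFmono (Set.mem_Ici.mpr hb) (Set.mem_Ici.mpr ha) h
      nlinarith
  have hSFnn : ∀ k, k < NT → 0 ≤ SF k := by
    intro k hk
    simp only [hSF]
    exact gsum_nonneg (fun i j => hFprod _ _ ((hKm k hk.le).1 i j) ((hKm' k hk.le).1 i j))
  have hFeq : ∀ k, k < NT → ∀ i j, F (m k i j) = F (m' k i j) := by
    have hz : ∀ k' ∈ Finset.range NT, (0:ℝ) ≤ Δt * SF k' := fun k' hk' =>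
      mul_nonneg hΔt.le (hSFnn k' (Finset.mem_range.mp hk'))
    have hsum0 : ∑ k' ∈ Finset.range NT, (Δt * SF k') ≤ 0 := by
      rw [sum_eq]
      exact Finset.sum_nonpos (fun k' hk' => mul_nonpos_of_nonneg_of_nonpos hΔt.le
        (claimA k' (Finset.mem_range.mp hk')))
    have hall := (Finset.sum_eq_zero_iff_of_nonneg hz).mp
      (le_antisymm hsum0 (Finset.sum_nonneg hz))
    intro k hk i j
    have hSF0 : SF k = 0 := by
      have := hall k (Finset.mem_range.mpr hk)
      exact (mul_eq_zero.mp this).resolve_left hne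
    have hSF0' : gsum (fun i j => (F (m k i j) - F (m' k i j)) * (m k i j - m' k i j))
        = 0 := by
      simp only [hSF] at hSF0
      exact hSF0
    have hpt := gsum_eq_zero
      (fun i j => hFprod _ _ ((hKm k hk.le).1 i j) ((hKm' k hk.le).1 i j)) hSF0' i j
    rcases mul_eq_zero.mp hpt with h | h
    · linarith
    · have hmm : m k i j = m' k i j := by linarith
      rw [hmm]
  -- Stage 2 : uniqueness of u by forward induction
  have hu : ∀ n, n ≤ NT → u n = u' n := by
    intro n
    induction n with
    | zero => intro _; exact hu0
    | succ k ih =>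
      intro hk'
      have hk : k < NT := hk'
      have huk : u k = u' k := ih hk.le
      apply bellman_step_unique hg1 hΔt hν
      intro i j
      have hbb : u k i j = u' k i j := by rw [huk]
      linear_combination e1' k hk i j - e2' k hk i j + hbb + Δt * hFeq k hk i j
  -- Stage 3 : uniqueness of m by backward induction
  have hmdown : ∀ d, d ≤ NT → m (NT - d) = m' (NT - d) := by
    intro d
    induction d with
    | zero => intro _; simpa using hmT
    | succ dd ih =>
      intro hdd
      have hprev : m (NT - dd) = m' (NT - dd) := ih (Nat.le_of_succ_le hdd)
      have hkN : NT - (dd+1) < NT := by omega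
      have hk1 : NT - (dd+1) + 1 = NT - dd := by omega
      have hueq : u (NT - (dd+1) + 1) = u' (NT - (dd+1) + 1) := hu _ (by omega)
      have hsign : ∀ i j, gq (gridPt N i j) (nablah (u (NT - (dd+1) + 1)) i j) 0 ≤ 0
          ∧ 0 ≤ gq (gridPt N i j) (nablah (u (NT - (dd+1) + 1)) i j) 1
          ∧ gq (gridPt N i j) (nablah (u (NT - (dd+1) + 1)) i j) 2 ≤ 0
          ∧ 0 ≤ gq (gridPt N i j) (nablah (u (NT - (dd+1) + 1)) i j) 3 :=
        fun i j => gq_signs hg1 hg3 (gridPt N i j) (nablah (u (NT - (dd+1) + 1)) i j)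
      have hμ : ∀ i j, m (NT - (dd+1)) i j - m' (NT - (dd+1)) i j
          = Δt * (ν * laph (fun a b => m (NT - (dd+1)) a b - m' (NT - (dd+1)) a b) i j
            + Transp gq (u (NT - (dd+1) + 1))
                (fun a b => m (NT - (dd+1)) a b - m' (NT - (dd+1)) a b) i j) := by
        intro i j
        have e3 := e3' (NT - (dd+1)) hkN i j
        have e4 := e4' (NT - (dd+1)) hkN i j
        rw [← hueq] at e4
        have hmeq : m (NT - (dd+1) + 1) i j = m' (NT - (dd+1) + 1) i j := by
          rw [hk1, hprev]
        have l1 := laph_sub_point (m (NT - (dd+1))) (m' (NT - (dd+1))) i j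
        have l2 := transp_sub gq (u (NT - (dd+1) + 1)) (m (NT - (dd+1)))
          (m' (NT - (dd+1))) i j
        linear_combination (-1) * e3 + e4 + hmeq + Δt * ν * l1 + Δt * l2
      have hz := fp_step_unique hΔt hν (u (NT - (dd+1) + 1)) hsign
        (fun a b => m (NT - (dd+1)) a b - m' (NT - (dd+1)) a b) hμ
      funext i j
      have := hz i j
      linarith
  have hm : ∀ n, n ≤ NT → m n = m' n := by
    intro n hn
    have := hmdown (NT - n) (by omega)
    rwa [Nat.sub_sub_self hn] at this
  intro n hn
  exact ⟨hu n hn, hm n hn⟩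

end
end

section
/- Assume (g1) and (g3) for the numerical Hamiltonian g. Let (u^n)_{0≤n≤N_T} be grid functions, and let (m^n)_{0≤n≤N_T} be grid functions satisfying the discrete Fokker–Planck equation (m^{n+1}_{i,j} − m^n_{i,j})/Δt + ν(Δ_h m^n)_{i,j} + 𝒯_{i,j}(u^{n+1}, m^n) = 0 for all i,j and all 0 ≤ n < N_T. If m^{N_T} ∈ 𝒦_h, then m^n ∈ 𝒦_h for all n with 0 ≤ n < N_T (i.e., the scheme preserves nonnegativity and total mass h² Σ_{i,j} m^n_{i,j} = 1). -/
open Finset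

noncomputable section

section AuxKh

variable {N : ℕ} [NeZero N]

lemma zsum_shift (f : ZMod N → ℝ) (a : ZMod N) : ∑ i, f (i + a) = ∑ i, f i :=
  Fintype.sum_equiv (Equiv.addRight a) _ _ fun _ => rfl

lemma dd_E (F : ZMod N → ZMod N → ℝ) : ∑ i, ∑ j, (F (i+1) j - F i j) = 0 := by
  have h : ∑ i, ∑ j, F (i+1) j = ∑ i, ∑ j, F i j := zsum_shift (fun i => ∑ j, F i j) 1
  simp [Finset.sum_sub_distrib, h]

lemma dd_W (F : ZMod N → ZMod N → ℝ) : ∑ i, ∑ j, (F (i-1) j - F i j) = 0 := by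
  have h : ∑ i, ∑ j, F (i-1) j = ∑ i, ∑ j, F i j := by
    have := zsum_shift (fun i => ∑ j, F i j) (-1)
    simpa [sub_eq_add_neg] using this
  simp [Finset.sum_sub_distrib, h]

lemma dd_N (F : ZMod N → ZMod N → ℝ) : ∑ i, ∑ j, (F i (j+1) - F i j) = 0 := by
  have h : ∑ i, ∑ j, F i (j+1) = ∑ i, ∑ j, F i j :=
    Finset.sum_congr rfl fun i _ => zsum_shift (fun j => F i j) 1
  simp [Finset.sum_sub_distrib, h]

lemma dd_S (F : ZMod N → ZMod N → ℝ) : ∑ i, ∑ j, (F i (j-1) - F i j) = 0 := by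
  have h : ∑ i, ∑ j, F i (j-1) = ∑ i, ∑ j, F i j := by
    refine Finset.sum_congr rfl fun i _ => ?_
    have := zsum_shift (fun j => F i j) (-1)
    simpa [sub_eq_add_neg] using this
  simp [Finset.sum_sub_distrib, h]

lemma deriv_nonpos_of_anti {f : ℝ → ℝ} {f' a : ℝ}
    (hf : ∀ s t : ℝ, s ≤ t → f t ≤ f s) (h : HasDerivAt f f' a) : f' ≤ 0 := by
  have hs := hasDerivAt_iff_tendsto_slope.1 h
  have hs' : Filter.Tendsto (slope f a) (nhdsWithin a (Set.Ioi a)) (nhds f') :=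
    hs.mono_left (nhdsWithin_mono a (by intro x hx; exact ne_of_gt hx))
  refine le_of_tendsto hs' ?_
  filter_upwards [self_mem_nhdsWithin] with t ht
  have h1 : f t - f a ≤ 0 := sub_nonpos.2 (hf a t (le_of_lt ht))
  have h2 : 0 < t - a := sub_pos.2 ht
  simp only [slope_def_field, div_nonpos_iff]
  exact Or.inr ⟨by simpa [slope] using h1, le_of_lt h2⟩

lemma deriv_nonneg_of_mono {f : ℝ → ℝ} {f' a : ℝ}
    (hf : ∀ s t : ℝ, s ≤ t → f s ≤ f t) (h : HasDerivAt f f' a) : 0 ≤ f' := by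
  have := deriv_nonpos_of_anti (f := fun t => -f t) (f' := -f') (a := a)
    (fun s t hst => neg_le_neg (hf s t hst)) h.neg
  linarith

lemma gridh_pos (hN : (N : ℝ) ≠ 0) : 0 < gridh N := by
  unfold gridh
  have : 0 < (N : ℝ) := lt_of_le_of_ne (Nat.cast_nonneg N) (Ne.symm hN)
  positivity

/-- One backward step preserves membership in `𝒦_h`. -/
lemma step_preserves (ν Δt : ℝ) (hν : 0 < ν) (hΔt : 0 < Δt)
    (gq : Torus → (Fin 4 → ℝ) → (Fin 4 → ℝ))
    (hsgn : ∀ x q, gq x q 0 ≤ 0 ∧ 0 ≤ gq x q 1 ∧ gq x q 2 ≤ 0 ∧ 0 ≤ gq x q 3)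
    (u m m' : ZMod N → ZMod N → ℝ)
    (hfp : ∀ i j, (m' i j - m i j) / Δt + ν * laph m i j + Transp gq u m i j = 0)
    (hm' : inKh m') : inKh m := by
  have hN : (N : ℝ) ≠ 0 := Nat.cast_ne_zero.2 (NeZero.ne N)
  have hh : 0 < gridh N := gridh_pos hN
  set h : ℝ := gridh N with hh_def
  set c : ℝ := Δt * ν / h ^ 2 with hc_def
  set d : ℝ := Δt / h with hd_def
  have hc : 0 < c := by positivity
  have hd : 0 < d := by positivity
  -- explicit form of the scheme
  have hfp' : ∀ i j, m' i j = m i j - Δt * (ν * laph m i j + Transp gq u m i j) := by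
    intro i j
    have := hfp i j
    field_simp at this
    linarith
  -- the summation-by-parts identity
  have key : ∀ χ : ZMod N → ZMod N → ℝ,
      ∑ i, ∑ j, χ i j * m' i j
        = ∑ i, ∑ j, m i j *
            (χ i j
              + c * (4 * χ i j - χ (i+1) j - χ (i-1) j - χ i (j+1) - χ i (j-1))
              + d * ((-(gq (gridPt N i j) (nablah u i j) 0)) * (χ i j - χ (i+1) j)
                  + gq (gridPt N i j) (nablah u i j) 1 * (χ i j - χ (i-1) j)
                  + (-(gq (gridPt N i j) (nablah u i j) 2)) * (χ i j - χ i (j+1))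
                  + gq (gridPt N i j) (nablah u i j) 3 * (χ i j - χ i (j-1)))) := by
    intro χ
    have hpt : ∀ i j : ZMod N,
        χ i j * m' i j
          - m i j *
            (χ i j
              + c * (4 * χ i j - χ (i+1) j - χ (i-1) j - χ i (j+1) - χ i (j-1))
              + d * ((-(gq (gridPt N i j) (nablah u i j) 0)) * (χ i j - χ (i+1) j)
                  + gq (gridPt N i j) (nablah u i j) 1 * (χ i j - χ (i-1) j)
                  + (-(gq (gridPt N i j) (nablah u i j) 2)) * (χ i j - χ i (j+1))
                  + gq (gridPt N i j) (nablah u i j) 3 * (χ i j - χ i (j-1))))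
        = (((fun i j => χ (i-1) j * m i j * (-c - d * gq (gridPt N i j) (nablah u i j) 1)) (i+1) j
            - (fun i j => χ (i-1) j * m i j * (-c - d * gq (gridPt N i j) (nablah u i j) 1)) i j)
          + ((fun i j => χ (i+1) j * m i j * (-c + d * gq (gridPt N i j) (nablah u i j) 0)) (i-1) j
            - (fun i j => χ (i+1) j * m i j * (-c + d * gq (gridPt N i j) (nablah u i j) 0)) i j))
          + (((fun i j => χ i (j-1) * m i j * (-c - d * gq (gridPt N i j) (nablah u i j) 3)) i (j+1)
            - (fun i j => χ i (j-1) * m i j * (-c - d * gq (gridPt N i j) (nablah u i j) 3)) i j)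
          + ((fun i j => χ i (j+1) * m i j * (-c + d * gq (gridPt N i j) (nablah u i j) 2)) i (j-1)
            - (fun i j => χ i (j+1) * m i j * (-c + d * gq (gridPt N i j) (nablah u i j) 2)) i j)) := by
      intro i j
      simp only [hfp' i j, laph, Transp, hc_def, hd_def, ← hh_def,
        add_sub_cancel_right, sub_add_cancel]
      field_simp
      ring
    calc ∑ i, ∑ j, χ i j * m' i j
        = ∑ i, ∑ j, (m i j *
            (χ i j
              + c * (4 * χ i j - χ (i+1) j - χ (i-1) j - χ i (j+1) - χ i (j-1))
              + d * ((-(gq (gridPt N i j) (nablah u i j) 0)) * (χ i j - χ (i+1) j)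
                  + gq (gridPt N i j) (nablah u i j) 1 * (χ i j - χ (i-1) j)
                  + (-(gq (gridPt N i j) (nablah u i j) 2)) * (χ i j - χ i (j+1))
                  + gq (gridPt N i j) (nablah u i j) 3 * (χ i j - χ i (j-1))))
            + ((((fun i j => χ (i-1) j * m i j * (-c - d * gq (gridPt N i j) (nablah u i j) 1)) (i+1) j
            - (fun i j => χ (i-1) j * m i j * (-c - d * gq (gridPt N i j) (nablah u i j) 1)) i j)
          + ((fun i j => χ (i+1) j * m i j * (-c + d * gq (gridPt N i j) (nablah u i j) 0)) (i-1) j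
            - (fun i j => χ (i+1) j * m i j * (-c + d * gq (gridPt N i j) (nablah u i j) 0)) i j))
          + (((fun i j => χ i (j-1) * m i j * (-c - d * gq (gridPt N i j) (nablah u i j) 3)) i (j+1)
            - (fun i j => χ i (j-1) * m i j * (-c - d * gq (gridPt N i j) (nablah u i j) 3)) i j)
          + ((fun i j => χ i (j+1) * m i j * (-c + d * gq (gridPt N i j) (nablah u i j) 2)) i (j-1)
            - (fun i j => χ i (j+1) * m i j * (-c + d * gq (gridPt N i j) (nablah u i j) 2)) i j)))) := by
          refine Finset.sum_congr rfl fun i _ => Finset.sum_congr rfl fun j _ => ?_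
          have := hpt i j
          linarith
      _ = _ := by
          have e1 := dd_E (fun i j => χ (i-1) j * m i j * (-c - d * gq (gridPt N i j) (nablah u i j) 1))
          have e2 := dd_W (fun i j => χ (i+1) j * m i j * (-c + d * gq (gridPt N i j) (nablah u i j) 0))
          have e3 := dd_N (fun i j => χ i (j-1) * m i j * (-c - d * gq (gridPt N i j) (nablah u i j) 3))
          have e4 := dd_S (fun i j => χ i (j+1) * m i j * (-c + d * gq (gridPt N i j) (nablah u i j) 2))
          beta_reduce at e1 e2 e3 e4
          simp only [Finset.sum_add_distrib]
          rw [e1, e2, e3, e4]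
          ring
  -- mass conservation
  have mass : ∑ i, ∑ j, m' i j = ∑ i, ∑ j, m i j := by
    have := key (fun _ _ => (1:ℝ))
    norm_num at this
    exact this
  -- nonnegativity
  have nonneg : ∀ i j, 0 ≤ m i j := by
    by_contra hneg
    push_neg at hneg
    obtain ⟨i0, j0, hij⟩ := hneg
    set χ : ZMod N → ZMod N → ℝ := fun i j => if m i j < 0 then 1 else 0 with hχ_def
    have hχ0 : ∀ i j, 0 ≤ χ i j := by
      intro i j; simp only [hχ_def]; split <;> norm_num
    have hχ1 : ∀ i j, χ i j ≤ 1 := by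
      intro i j; simp only [hχ_def]; split <;> norm_num
    have hkey := key χ
    have hL : 0 ≤ ∑ i, ∑ j, χ i j * m' i j :=
      Finset.sum_nonneg fun i _ => Finset.sum_nonneg fun j _ =>
        mul_nonneg (hχ0 i j) (hm'.1 i j)
    have hpt : ∀ i j : ZMod N, m i j *
            (χ i j
              + c * (4 * χ i j - χ (i+1) j - χ (i-1) j - χ i (j+1) - χ i (j-1))
              + d * ((-(gq (gridPt N i j) (nablah u i j) 0)) * (χ i j - χ (i+1) j)
                  + gq (gridPt N i j) (nablah u i j) 1 * (χ i j - χ (i-1) j)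
                  + (-(gq (gridPt N i j) (nablah u i j) 2)) * (χ i j - χ i (j+1))
                  + gq (gridPt N i j) (nablah u i j) 3 * (χ i j - χ i (j-1))))
          ≤ χ i j * m i j := by
      intro i j
      obtain ⟨s0, s1, s2, s3⟩ := hsgn (gridPt N i j) (nablah u i j)
      by_cases hm : m i j < 0
      · have hc1 : χ i j = 1 := if_pos hm
        have t1 : 0 ≤ c * (4 * χ i j - χ (i+1) j - χ (i-1) j - χ i (j+1) - χ i (j-1)) := by
          apply mul_nonneg hc.le
          have := hχ1 (i+1) j; have := hχ1 (i-1) j; have := hχ1 i (j+1); have := hχ1 i (j-1)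
          rw [hc1]; linarith
        have t2 : 0 ≤ (-(gq (gridPt N i j) (nablah u i j) 0)) * (χ i j - χ (i+1) j) :=
          mul_nonneg (by linarith) (by rw [hc1]; linarith [hχ1 (i+1) j])
        have t3 : 0 ≤ gq (gridPt N i j) (nablah u i j) 1 * (χ i j - χ (i-1) j) :=
          mul_nonneg s1 (by rw [hc1]; linarith [hχ1 (i-1) j])
        have t4 : 0 ≤ (-(gq (gridPt N i j) (nablah u i j) 2)) * (χ i j - χ i (j+1)) :=
          mul_nonneg (by linarith) (by rw [hc1]; linarith [hχ1 i (j+1)])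
        have t5 : 0 ≤ gq (gridPt N i j) (nablah u i j) 3 * (χ i j - χ i (j-1)) :=
          mul_nonneg s3 (by rw [hc1]; linarith [hχ1 i (j-1)])
        have hd4 : 0 ≤ d * ((-(gq (gridPt N i j) (nablah u i j) 0)) * (χ i j - χ (i+1) j)
                  + gq (gridPt N i j) (nablah u i j) 1 * (χ i j - χ (i-1) j)
                  + (-(gq (gridPt N i j) (nablah u i j) 2)) * (χ i j - χ i (j+1))
                  + gq (gridPt N i j) (nablah u i j) 3 * (χ i j - χ i (j-1))) :=
          mul_nonneg hd.le (by linarith)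
        have hb : 1 ≤ χ i j
              + c * (4 * χ i j - χ (i+1) j - χ (i-1) j - χ i (j+1) - χ i (j-1))
              + d * ((-(gq (gridPt N i j) (nablah u i j) 0)) * (χ i j - χ (i+1) j)
                  + gq (gridPt N i j) (nablah u i j) 1 * (χ i j - χ (i-1) j)
                  + (-(gq (gridPt N i j) (nablah u i j) 2)) * (χ i j - χ i (j+1))
                  + gq (gridPt N i j) (nablah u i j) 3 * (χ i j - χ i (j-1))) := by
          linarith [t1, hd4]
        have step1 := mul_le_mul_of_nonpos_left hb hm.le
        have hz : χ i j * m i j = m i j * 1 := by rw [hc1]; ring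
        linarith [step1, hz]
      · have hc0 : χ i j = 0 := if_neg hm
        rw [not_lt] at hm
        have t1 : c * (4 * χ i j - χ (i+1) j - χ (i-1) j - χ i (j+1) - χ i (j-1)) ≤ 0 := by
          apply mul_nonpos_of_nonneg_of_nonpos hc.le
          have := hχ0 (i+1) j; have := hχ0 (i-1) j; have := hχ0 i (j+1); have := hχ0 i (j-1)
          rw [hc0]; linarith
        have t2 : (-(gq (gridPt N i j) (nablah u i j) 0)) * (χ i j - χ (i+1) j) ≤ 0 :=
          mul_nonpos_of_nonneg_of_nonpos (by linarith) (by rw [hc0]; linarith [hχ0 (i+1) j])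
        have t3 : gq (gridPt N i j) (nablah u i j) 1 * (χ i j - χ (i-1) j) ≤ 0 :=
          mul_nonpos_of_nonneg_of_nonpos s1 (by rw [hc0]; linarith [hχ0 (i-1) j])
        have t4 : (-(gq (gridPt N i j) (nablah u i j) 2)) * (χ i j - χ i (j+1)) ≤ 0 :=
          mul_nonpos_of_nonneg_of_nonpos (by linarith) (by rw [hc0]; linarith [hχ0 i (j+1)])
        have t5 : gq (gridPt N i j) (nablah u i j) 3 * (χ i j - χ i (j-1)) ≤ 0 :=
          mul_nonpos_of_nonneg_of_nonpos s3 (by rw [hc0]; linarith [hχ0 i (j-1)])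
        have hd4 : d * ((-(gq (gridPt N i j) (nablah u i j) 0)) * (χ i j - χ (i+1) j)
                  + gq (gridPt N i j) (nablah u i j) 1 * (χ i j - χ (i-1) j)
                  + (-(gq (gridPt N i j) (nablah u i j) 2)) * (χ i j - χ i (j+1))
                  + gq (gridPt N i j) (nablah u i j) 3 * (χ i j - χ i (j-1))) ≤ 0 :=
          mul_nonpos_of_nonneg_of_nonpos hd.le (by linarith)
        have hb : χ i j
              + c * (4 * χ i j - χ (i+1) j - χ (i-1) j - χ i (j+1) - χ i (j-1))
              + d * ((-(gq (gridPt N i j) (nablah u i j) 0)) * (χ i j - χ (i+1) j)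
                  + gq (gridPt N i j) (nablah u i j) 1 * (χ i j - χ (i-1) j)
                  + (-(gq (gridPt N i j) (nablah u i j) 2)) * (χ i j - χ i (j+1))
                  + gq (gridPt N i j) (nablah u i j) 3 * (χ i j - χ i (j-1))) ≤ 0 := by
          linarith [t1, hd4]
        have step1 := mul_nonpos_of_nonneg_of_nonpos hm hb
        have hz : χ i j * m i j = 0 := by rw [hc0]; ring
        linarith [step1, hz]
    have hR1 : ∑ i, ∑ j, m i j *
            (χ i j
              + c * (4 * χ i j - χ (i+1) j - χ (i-1) j - χ i (j+1) - χ i (j-1))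
              + d * ((-(gq (gridPt N i j) (nablah u i j) 0)) * (χ i j - χ (i+1) j)
                  + gq (gridPt N i j) (nablah u i j) 1 * (χ i j - χ (i-1) j)
                  + (-(gq (gridPt N i j) (nablah u i j) 2)) * (χ i j - χ i (j+1))
                  + gq (gridPt N i j) (nablah u i j) 3 * (χ i j - χ i (j-1))))
          ≤ ∑ i, ∑ j, χ i j * m i j :=
      Finset.sum_le_sum fun i _ => Finset.sum_le_sum fun j _ => hpt i j
    have heach : ∀ i j : ZMod N, χ i j * m i j ≤ 0 := by
      intro i j
      by_cases hm : m i j < 0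
      · rw [hχ_def]; simp only [if_pos hm]; linarith
      · rw [hχ_def]; simp only [if_neg hm]; simp
    have hinner : ∑ j, χ i0 j * m i0 j < 0 := by
      have h1 : ∀ j ∈ Finset.univ, χ i0 j * m i0 j ≤ (fun _ => (0:ℝ)) j :=
        fun j _ => heach i0 j
      have h2 : ∃ j ∈ Finset.univ, χ i0 j * m i0 j < (fun _ => (0:ℝ)) j := by
        refine ⟨j0, Finset.mem_univ _, ?_⟩
        simp only [hχ_def, if_pos hij]
        linarith
      calc ∑ j, χ i0 j * m i0 j < ∑ _j : ZMod N, (0:ℝ) :=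
            Finset.sum_lt_sum h1 h2
        _ = 0 := by simp
    have hR2 : ∑ i, ∑ j, χ i j * m i j < 0 := by
      have h1 : ∀ i ∈ Finset.univ, ∑ j, χ i j * m i j ≤ (fun _ => (0:ℝ)) i :=
        fun i _ => Finset.sum_nonpos fun j _ => heach i j
      have h2 : ∃ i ∈ Finset.univ, ∑ j, χ i j * m i j < (fun _ => (0:ℝ)) i :=
        ⟨i0, Finset.mem_univ _, hinner⟩
      calc ∑ i, ∑ j, χ i j * m i j < ∑ _i : ZMod N, (0:ℝ) := Finset.sum_lt_sum h1 h2
        _ = 0 := by simp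
    linarith
  exact ⟨nonneg, by rw [← mass]; exact hm'.2⟩

lemma gq_signs (g : Torus → (Fin 4 → ℝ) → ℝ) (gq : Torus → (Fin 4 → ℝ) → (Fin 4 → ℝ))
    (hg1 : Hg1 g) (hg3 : Hg3 g gq) :
    ∀ x q, gq x q 0 ≤ 0 ∧ 0 ≤ gq x q 1 ∧ gq x q 2 ≤ 0 ∧ 0 ≤ gq x q 3 := by
  intro x q
  have hd := hg3.2.2
  refine ⟨?_, ?_, ?_, ?_⟩
  · exact deriv_nonpos_of_anti (fun s t hst => (hg1 x q s t hst).1) (hd x q 0)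
  · exact deriv_nonneg_of_mono (fun s t hst => (hg1 x q s t hst).2.2.1) (hd x q 1)
  · exact deriv_nonpos_of_anti (fun s t hst => (hg1 x q s t hst).2.1) (hd x q 2)
  · exact deriv_nonneg_of_mono (fun s t hst => (hg1 x q s t hst).2.2.2) (hd x q 3)

end AuxKh

/-- The discrete Fokker–Planck scheme preserves `𝒦_h`.
Under (g1) and (g3), if `(m^n)` solves the discrete Fokker–Planck equation for
`0 ≤ n < N_T` and `m^{N_T} ∈ 𝒦_h`, then `m^n ∈ 𝒦_h` for all `0 ≤ n < N_T`. -/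
theorem discrete_FP_preserves_Kh (N NT : ℕ) [NeZero N] (hNT : 0 < NT)
    (ν Δt : ℝ) (hν : 0 < ν) (hΔt : 0 < Δt)
    (g : Torus → (Fin 4 → ℝ) → ℝ) (gq : Torus → (Fin 4 → ℝ) → (Fin 4 → ℝ))
    (hg1 : Hg1 g) (hg3 : Hg3 g gq)
    (u m : ℕ → ZMod N → ZMod N → ℝ)
    (hFP : FPEq gq ν Δt u m NT)
    (hmT : inKh (m NT)) :
    ∀ n < NT, inKh (m n) := by
  have hsgn := gq_signs g gq hg1 hg3
  have hFP' : ∀ k, k < NT → ∀ i j, (m (k + 1) i j - m k i j) / Δt + ν * laph (m k) i j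
      + Transp gq (u (k + 1)) (m k) i j = 0 := hFP
  have key : ∀ d : ℕ, d ≤ NT → inKh (m (NT - d)) := by
    intro d
    induction d with
    | zero => intro _; simpa using hmT
    | succ k ih =>
        intro hk
        have hk' : k ≤ NT := Nat.le_of_succ_le hk
        have h1 := ih hk'
        have hlt : NT - (k + 1) < NT := by omega
        have hstep : NT - (k + 1) + 1 = NT - k := by omega
        refine step_preserves ν Δt hν hΔt gq hsgn (u (NT - (k + 1) + 1))
          (m (NT - (k + 1))) (m (NT - (k + 1) + 1)) ?_ ?_
        · intro i j; exact hFP' (NT - (k + 1)) hlt i j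
        · rw [hstep]; exact h1
  intro n hn
  have := key (NT - n) (Nat.sub_le _ _)
  rwa [Nat.sub_sub_self (le_of_lt hn)] at this

end
end

section
/- Let ℋ : 𝕋² → ℝ be continuous, let 1 < β ≤ 2, and define g(x, q) = ℋ(x) + G(q₁⁻, q₂⁺, q₃⁻, q₄⁺) for q = (q₁,q₂,q₃,q₄) ∈ ℝ⁴, where G(p) = (p₁² + p₂² + p₃² + p₄²)^{β/2}. Then g is C¹ in q, and for all (x,q): ∇_q g(x,q) · q = β · G(q₁⁻, q₂⁺, q₃⁻, q₄⁺) and |∇_q g(x,q)|² = β² · ( G(q₁⁻, q₂⁺, q₃⁻, q₄⁺) )^{2(β−1)/β}. Consequently g satisfies (g5): there exist positive constants c₁, c₂, c₃, c₄ such that for all (x,q), ∇_q g(x,q)·q − g(x,q) ≥ c₁ |∇_q g(x,q)|² − c₂ and |∇_q g(x,q)| ≤ c₃ |q| + c₄. -/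
open Finset Asymptotics Filter

noncomputable section

private lemma mg5_hasDerivAt_max_sq (t : ℝ) :
    HasDerivAt (fun u : ℝ => max u 0 ^ 2) (2 * max t 0) t := by
  rcases lt_trichotomy t 0 with h | h | h
  · have : max t 0 = 0 := max_eq_right h.le
    rw [this, mul_zero]
    have hev : (fun u : ℝ => max u 0 ^ 2) =ᶠ[nhds t] fun _ => (0:ℝ) := by
      filter_upwards [Iio_mem_nhds h] with u hu
      simp [max_eq_right (le_of_lt (Set.mem_Iio.mp hu))]
    exact (hasDerivAt_const t (0:ℝ)).congr_of_eventuallyEq hev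
  · subst h
    rw [hasDerivAt_iff_isLittleO]
    simp only [max_self, ne_eq, OfNat.ofNat_ne_zero, not_false_eq_true, zero_pow, mul_zero,
      sub_zero, smul_zero]
    rw [isLittleO_iff]
    intro c hc
    filter_upwards [Metric.ball_mem_nhds (0:ℝ) hc] with u hu
    rw [Real.ball_eq_Ioo] at hu
    have h1 : |max u 0 ^ 2| = max u 0 ^ 2 := abs_of_nonneg (by positivity)
    have h2 : max u 0 ^ 2 ≤ u ^ 2 := by
      rcases le_total u 0 with h | h
      · simp [max_eq_right h]; positivity
      · simp [max_eq_left h]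
    have h3 : u ^ 2 ≤ c * |u| := by
      rw [sq, ← abs_mul_abs_self u]
      have : |u| ≤ c := by
        rw [abs_le]; constructor <;> [linarith [hu.1]; linarith [hu.2]]
      nlinarith [abs_nonneg u]
    simpa [h1, Real.norm_eq_abs] using le_trans h2 h3
  · have : max t 0 = t := max_eq_left h.le
    rw [this]
    have hev : (fun u : ℝ => max u 0 ^ 2) =ᶠ[nhds t] fun u => u ^ 2 := by
      filter_upwards [Ioi_mem_nhds h] with u hu
      simp [max_eq_left (le_of_lt (Set.mem_Ioi.mp hu))]
    simpa using (hasDerivAt_pow 2 t).congr_of_eventuallyEq hev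

/-- The slack-squared function `S(q)`. -/
private def mg5S (q : Fin 4 → ℝ) : ℝ :=
  max (-(q 0)) 0 ^ 2 + max (q 1) 0 ^ 2 + max (-(q 2)) 0 ^ 2 + max (q 3) 0 ^ 2

private lemma mg5S_nonneg (q : Fin 4 → ℝ) : 0 ≤ mg5S q := by unfold mg5S; positivity

private lemma mg5S_cont : Continuous mg5S := by
  unfold mg5S; fun_prop

private lemma mg5S_eq_zero {q : Fin 4 → ℝ} (h : mg5S q = 0) :
    max (-(q 0)) 0 = 0 ∧ max (q 1) 0 = 0 ∧ max (-(q 2)) 0 = 0 ∧ max (q 3) 0 = 0 := by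
  unfold mg5S at h
  have h0 := sq_nonneg (max (-(q 0)) 0); have h1 := sq_nonneg (max (q 1) 0)
  have h2 := sq_nonneg (max (-(q 2)) 0); have h3 := sq_nonneg (max (q 3) 0)
  have m0 := le_max_right (-(q 0)) 0; have m1 := le_max_right (q 1) 0
  have m2 := le_max_right (-(q 2)) 0; have m3 := le_max_right (q 3) 0
  refine ⟨?_, ?_, ?_, ?_⟩ <;> nlinarith

private def mg5grad (β : ℝ) (q : Fin 4 → ℝ) : Fin 4 → ℝ :=
  ![-(β * mg5S q ^ (β/2 - 1) * max (-(q 0)) 0),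
    β * mg5S q ^ (β/2 - 1) * max (q 1) 0,
    -(β * mg5S q ^ (β/2 - 1) * max (-(q 2)) 0),
    β * mg5S q ^ (β/2 - 1) * max (q 3) 0]

private def mg5L (β : ℝ) (q : Fin 4 → ℝ) : (Fin 4 → ℝ) →L[ℝ] ℝ :=
  ∑ i, mg5grad β q i • (ContinuousLinearMap.proj i : (Fin 4 → ℝ) →L[ℝ] ℝ)

private lemma mg5L_apply (β : ℝ) (q v : Fin 4 → ℝ) :
    mg5L β q v = ∑ i, mg5grad β q i * v i := by
  simp [mg5L, ContinuousLinearMap.sum_apply, ContinuousLinearMap.smul_apply,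
    ContinuousLinearMap.proj_apply, smul_eq_mul]

private lemma mg5_hasFDerivAt_S (q : Fin 4 → ℝ) : HasFDerivAt mg5S
    ((2 * max (-(q 0)) 0) • (-(ContinuousLinearMap.proj 0 : (Fin 4 → ℝ) →L[ℝ] ℝ))
     + (2 * max (q 1) 0) • (ContinuousLinearMap.proj 1 : (Fin 4 → ℝ) →L[ℝ] ℝ)
     + (2 * max (-(q 2)) 0) • (-(ContinuousLinearMap.proj 2 : (Fin 4 → ℝ) →L[ℝ] ℝ))
     + (2 * max (q 3) 0) • (ContinuousLinearMap.proj 3 : (Fin 4 → ℝ) →L[ℝ] ℝ)) q := by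
  have h0 : HasFDerivAt (fun q : Fin 4 → ℝ => max (-(q 0)) 0 ^ 2)
      ((2 * max (-(q 0)) 0) • (-(ContinuousLinearMap.proj 0 : (Fin 4 → ℝ) →L[ℝ] ℝ))) q :=
    (mg5_hasDerivAt_max_sq ((-(⇑(ContinuousLinearMap.proj (R := ℝ) (φ := fun _ : Fin 4 => ℝ) 0))) q)).comp_hasFDerivAt q
      ((ContinuousLinearMap.proj (R := ℝ) (φ := fun _ : Fin 4 => ℝ) 0).hasFDerivAt.neg)
  have h1 : HasFDerivAt (fun q : Fin 4 → ℝ => max (q 1) 0 ^ 2)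
      ((2 * max (q 1) 0) • (ContinuousLinearMap.proj 1 : (Fin 4 → ℝ) →L[ℝ] ℝ)) q :=
    (mg5_hasDerivAt_max_sq (ContinuousLinearMap.proj (R := ℝ) (φ := fun _ : Fin 4 => ℝ) 1 q)).comp_hasFDerivAt q
      (ContinuousLinearMap.proj (R := ℝ) (φ := fun _ : Fin 4 => ℝ) 1).hasFDerivAt
  have h2 : HasFDerivAt (fun q : Fin 4 → ℝ => max (-(q 2)) 0 ^ 2)
      ((2 * max (-(q 2)) 0) • (-(ContinuousLinearMap.proj 2 : (Fin 4 → ℝ) →L[ℝ] ℝ))) q :=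
    (mg5_hasDerivAt_max_sq ((-(⇑(ContinuousLinearMap.proj (R := ℝ) (φ := fun _ : Fin 4 => ℝ) 2))) q)).comp_hasFDerivAt q
      ((ContinuousLinearMap.proj (R := ℝ) (φ := fun _ : Fin 4 => ℝ) 2).hasFDerivAt.neg)
  have h3 : HasFDerivAt (fun q : Fin 4 → ℝ => max (q 3) 0 ^ 2)
      ((2 * max (q 3) 0) • (ContinuousLinearMap.proj 3 : (Fin 4 → ℝ) →L[ℝ] ℝ)) q :=
    (mg5_hasDerivAt_max_sq (ContinuousLinearMap.proj (R := ℝ) (φ := fun _ : Fin 4 => ℝ) 3 q)).comp_hasFDerivAt q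
      (ContinuousLinearMap.proj (R := ℝ) (φ := fun _ : Fin 4 => ℝ) 3).hasFDerivAt
  exact ((h0.add h1).add h2).add h3

private lemma mg5grad_zero {β : ℝ} {q : Fin 4 → ℝ} (h : mg5S q = 0) : mg5L β q = 0 := by
  obtain ⟨h0, h1, h2, h3⟩ := mg5S_eq_zero h
  have : mg5grad β q = fun _ => (0:ℝ) := by
    funext i
    fin_cases i <;> simp [mg5grad, h0, h1, h2, h3]
  ext v
  simp [mg5L_apply, this]

private lemma mg5_hasFDerivAt (β : ℝ) (hβ1 : 1 < β) (q : Fin 4 → ℝ) :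
    HasFDerivAt (fun q => mg5S q ^ (β/2)) (mg5L β q) q := by
  have hβ0 : (0:ℝ) < β := by linarith
  rcases eq_or_lt_of_le (mg5S_nonneg q) with hS | hS
  · -- S q = 0
    have hS0 : mg5S q = 0 := hS.symm
    rw [mg5grad_zero hS0, hasFDerivAt_iff_isLittleO_nhds_zero]
    have hf0 : mg5S q ^ (β/2) = 0 := by rw [hS0, Real.zero_rpow (by positivity)]
    simp only [hf0, ContinuousLinearMap.zero_apply, sub_zero]
    -- bound: mg5S (q + h) ≤ 4 * ‖h‖ ^ 2
    have key : ∀ h : Fin 4 → ℝ, mg5S (q + h) ≤ 4 * ‖h‖ ^ 2 := by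
      intro h
      obtain ⟨h0, h1, h2, h3⟩ := mg5S_eq_zero hS0
      have b : ∀ i : Fin 4, |h i| ≤ ‖h‖ := fun i => by
        simpa [Real.norm_eq_abs] using norm_le_pi_norm h i
      have c0 : max (-((q + h) 0)) 0 ≤ |h 0| := by
        have hq : 0 ≤ q 0 := by by_contra hc; push_neg at hc; simp [max_eq_left] at h0; linarith [h0, neg_pos.mpr hc]
        have : -((q + h) 0) ≤ |h 0| := by
          simp only [Pi.add_apply]; have := neg_abs_le (h 0); linarith
        exact max_le this (abs_nonneg _)
      have c1 : max ((q + h) 1) 0 ≤ |h 1| := by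
        have hq : q 1 ≤ 0 := by by_contra hc; push_neg at hc; simp [max_eq_left hc.le] at h1; linarith
        have : (q + h) 1 ≤ |h 1| := by
          simp only [Pi.add_apply]; have := le_abs_self (h 1); linarith
        exact max_le this (abs_nonneg _)
      have c2 : max (-((q + h) 2)) 0 ≤ |h 2| := by
        have hq : 0 ≤ q 2 := by by_contra hc; push_neg at hc; simp [max_eq_left] at h2; linarith [h2, neg_pos.mpr hc]
        have : -((q + h) 2) ≤ |h 2| := by
          simp only [Pi.add_apply]; have := neg_abs_le (h 2); linarith
        exact max_le this (abs_nonneg _)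
      have c3 : max ((q + h) 3) 0 ≤ |h 3| := by
        have hq : q 3 ≤ 0 := by by_contra hc; push_neg at hc; simp [max_eq_left hc.le] at h3; linarith
        have : (q + h) 3 ≤ |h 3| := by
          simp only [Pi.add_apply]; have := le_abs_self (h 3); linarith
        exact max_le this (abs_nonneg _)
      have n0 := le_max_right (-((q+h) 0)) 0
      have n1 := le_max_right ((q+h) 1) 0
      have n2 := le_max_right (-((q+h) 2)) 0
      have n3 := le_max_right ((q+h) 3) 0
      unfold mg5S
      have s0 : max (-((q+h) 0)) 0 ^ 2 ≤ ‖h‖^2 := by nlinarith [b 0, abs_nonneg (h 0)]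
      have s1 : max ((q+h) 1) 0 ^ 2 ≤ ‖h‖^2 := by nlinarith [b 1, abs_nonneg (h 1)]
      have s2 : max (-((q+h) 2)) 0 ^ 2 ≤ ‖h‖^2 := by nlinarith [b 2, abs_nonneg (h 2)]
      have s3 : max ((q+h) 3) 0 ^ 2 ≤ ‖h‖^2 := by nlinarith [b 3, abs_nonneg (h 3)]
      linarith
    rw [isLittleO_iff]
    intro c hc
    have T : Tendsto (fun h : Fin 4 → ℝ => (4:ℝ)^(β/2) * ‖h‖^(β-1)) (nhds 0) (nhds 0) := by
      have t1 : Tendsto (fun h : Fin 4 → ℝ => ‖h‖) (nhds 0) (nhds 0) := by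
        simpa using continuous_norm.tendsto (0 : Fin 4 → ℝ)
      have t2 : ContinuousAt (fun x : ℝ => x ^ (β-1)) 0 :=
        Real.continuousAt_rpow_const 0 (β-1) (Or.inr (by linarith))
      have t3 := t2.tendsto.comp t1
      rw [Real.zero_rpow (by intro hh; linarith [hh] : β - 1 ≠ 0)] at t3
      simpa using t3.const_mul ((4:ℝ)^(β/2))
    filter_upwards [T.eventually (gt_mem_nhds hc)] with h hh
    have hn : (0:ℝ) ≤ ‖h‖ := norm_nonneg h
    have e1 : mg5S (q + h) ^ (β/2) ≤ (4 * ‖h‖^2) ^ (β/2) :=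
      Real.rpow_le_rpow (mg5S_nonneg _) (key h) (by positivity)
    have e2 : ((4:ℝ) * ‖h‖^2) ^ (β/2) = (4:ℝ)^(β/2) * ‖h‖^(β-1) * ‖h‖ := by
      rw [Real.mul_rpow (by norm_num) (by positivity), mul_assoc]
      congr 1
      rw [← Real.rpow_natCast ‖h‖ 2, ← Real.rpow_mul hn]
      have he : ((2:ℕ):ℝ) * (β/2) = (β - 1) + 1 := by push_cast; ring
      rw [he, Real.rpow_add' hn (by intro hh'; linarith), Real.rpow_one]
    have e3 : ‖mg5S (q + h) ^ (β/2)‖ = mg5S (q + h) ^ (β/2) :=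
      Real.norm_of_nonneg (Real.rpow_nonneg (mg5S_nonneg _) _)
    rw [e3]
    calc mg5S (q + h) ^ (β/2) ≤ (4:ℝ)^(β/2) * ‖h‖^(β-1) * ‖h‖ := by rw [← e2]; exact e1
      _ ≤ c * ‖h‖ := by
          apply mul_le_mul_of_nonneg_right hh.le hn
  · -- S q > 0
    have hr : HasDerivAt (fun y : ℝ => y ^ (β/2)) ((β/2) * mg5S q ^ (β/2 - 1)) (mg5S q) :=
      Real.hasDerivAt_rpow_const (Or.inl hS.ne')
    have H := hr.comp_hasFDerivAt q (mg5_hasFDerivAt_S q)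
    have hD : mg5L β q = (β/2 * mg5S q ^ (β/2 - 1)) •
        ((2 * max (-(q 0)) 0) • (-(ContinuousLinearMap.proj 0 : (Fin 4 → ℝ) →L[ℝ] ℝ))
         + (2 * max (q 1) 0) • (ContinuousLinearMap.proj 1 : (Fin 4 → ℝ) →L[ℝ] ℝ)
         + (2 * max (-(q 2)) 0) • (-(ContinuousLinearMap.proj 2 : (Fin 4 → ℝ) →L[ℝ] ℝ))
         + (2 * max (q 3) 0) • (ContinuousLinearMap.proj 3 : (Fin 4 → ℝ) →L[ℝ] ℝ)) := by
      ext v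
      rw [mg5L_apply]
      simp only [Fin.sum_univ_four, mg5grad, Matrix.cons_val_zero, Matrix.cons_val_one,
        Matrix.head_cons, Matrix.cons_val_two, Matrix.tail_cons, Matrix.cons_val_three,
        ContinuousLinearMap.smul_apply, ContinuousLinearMap.add_apply,
        ContinuousLinearMap.neg_apply, ContinuousLinearMap.proj_apply, smul_eq_mul]
      ring
    rw [hD]
    exact H

private lemma mg5_cont_aux (β : ℝ) (hβ1 : 1 < β) (u : (Fin 4 → ℝ) → ℝ)
    (hu : Continuous u) (hun : ∀ q, 0 ≤ u q) (hub : ∀ q, u q ^ 2 ≤ mg5S q) :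
    Continuous fun q => mg5S q ^ (β/2 - 1) * u q := by
  rw [continuous_iff_continuousAt]
  intro q
  by_cases hS : mg5S q = 0
  · have huq : u q = 0 := by nlinarith [hun q, hub q, sq_nonneg (u q)]
    have bound : ∀ q' : Fin 4 → ℝ,
        mg5S q' ^ (β/2 - 1) * u q' ≤ mg5S q' ^ ((β-1)/2) := by
      intro q'
      rcases eq_or_lt_of_le (mg5S_nonneg q') with h0 | h0
      · have h0' : mg5S q' = 0 := h0.symm
        have : u q' = 0 := by nlinarith [hun q', hub q', sq_nonneg (u q')]
        rw [this, mul_zero]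
        exact Real.rpow_nonneg (mg5S_nonneg q') _
      · have hle : u q' ≤ mg5S q' ^ ((1:ℝ)/2) := by
          rw [← Real.sqrt_eq_rpow]
          calc u q' = Real.sqrt (u q' ^ 2) := (Real.sqrt_sq (hun q')).symm
            _ ≤ Real.sqrt (mg5S q') := Real.sqrt_le_sqrt (hub q')
        calc mg5S q' ^ (β/2 - 1) * u q' ≤ mg5S q' ^ (β/2 - 1) * mg5S q' ^ ((1:ℝ)/2) :=
              mul_le_mul_of_nonneg_left hle (Real.rpow_nonneg h0.le _)
          _ = mg5S q' ^ ((β-1)/2) := by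
              rw [← Real.rpow_add h0]; ring_nf
    have nonneg : ∀ q' : Fin 4 → ℝ, 0 ≤ mg5S q' ^ (β/2 - 1) * u q' := fun q' =>
      mul_nonneg (Real.rpow_nonneg (mg5S_nonneg q') _) (hun q')
    have Tu : Tendsto (fun q' : Fin 4 → ℝ => mg5S q' ^ ((β-1)/2)) (nhds q) (nhds 0) := by
      have t2 : ContinuousAt (fun x : ℝ => x ^ ((β-1)/2)) (mg5S q) :=
        Real.continuousAt_rpow_const _ _ (Or.inr (by linarith))
      have t3 := t2.tendsto.comp (mg5S_cont.continuousAt (x := q))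
      rw [hS, Real.zero_rpow (by intro hh; nlinarith : (β-1)/2 ≠ 0)] at t3
      exact t3
    have T0 : Tendsto (fun q' : Fin 4 → ℝ => mg5S q' ^ (β/2 - 1) * u q') (nhds q) (nhds 0) :=
      squeeze_zero nonneg bound Tu
    have : mg5S q ^ (β/2 - 1) * u q = 0 := by rw [huq, mul_zero]
    rw [ContinuousAt, this]
    exact T0
  · exact ((Real.continuousAt_rpow_const _ _ (Or.inl hS)).comp
      (mg5S_cont.continuousAt)).mul hu.continuousAt

private lemma mg5_cont_grad (β : ℝ) (hβ1 : 1 < β) :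
    Continuous fun q => mg5L β q := by
  have sqs : ∀ q : Fin 4 → ℝ, 0 ≤ max (-(q 0)) 0 ^ 2 ∧ 0 ≤ max (q 1) 0 ^ 2 ∧
      0 ≤ max (-(q 2)) 0 ^ 2 ∧ 0 ≤ max (q 3) 0 ^ 2 :=
    fun q => ⟨sq_nonneg _, sq_nonneg _, sq_nonneg _, sq_nonneg _⟩
  have b0 : ∀ q : Fin 4 → ℝ, max (-(q 0)) 0 ^ 2 ≤ mg5S q := by
    intro q; unfold mg5S; obtain ⟨a,b,c,d⟩ := sqs q; linarith
  have b1 : ∀ q : Fin 4 → ℝ, max (q 1) 0 ^ 2 ≤ mg5S q := by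
    intro q; unfold mg5S; obtain ⟨a,b,c,d⟩ := sqs q; linarith
  have b2 : ∀ q : Fin 4 → ℝ, max (-(q 2)) 0 ^ 2 ≤ mg5S q := by
    intro q; unfold mg5S; obtain ⟨a,b,c,d⟩ := sqs q; linarith
  have b3 : ∀ q : Fin 4 → ℝ, max (q 3) 0 ^ 2 ≤ mg5S q := by
    intro q; unfold mg5S; obtain ⟨a,b,c,d⟩ := sqs q; linarith
  have c0 := mg5_cont_aux β hβ1 (fun q => max (-(q 0)) 0) (by fun_prop)
    (fun q => le_max_right _ _) b0
  have c1 := mg5_cont_aux β hβ1 (fun q => max (q 1) 0) (by fun_prop)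
    (fun q => le_max_right _ _) b1
  have c2 := mg5_cont_aux β hβ1 (fun q => max (-(q 2)) 0) (by fun_prop)
    (fun q => le_max_right _ _) b2
  have c3 := mg5_cont_aux β hβ1 (fun q => max (q 3) 0) (by fun_prop)
    (fun q => le_max_right _ _) b3
  have d0 : Continuous fun q : Fin 4 → ℝ => -(β * mg5S q ^ (β/2-1) * max (-(q 0)) 0) :=
    ((continuous_const.mul c0).congr (fun q => (mul_assoc _ _ _).symm)).neg
  have d1 : Continuous fun q : Fin 4 → ℝ => β * mg5S q ^ (β/2-1) * max (q 1) 0 :=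
    (continuous_const.mul c1).congr (fun q => (mul_assoc _ _ _).symm)
  have d2 : Continuous fun q : Fin 4 → ℝ => -(β * mg5S q ^ (β/2-1) * max (-(q 2)) 0) :=
    ((continuous_const.mul c2).congr (fun q => (mul_assoc _ _ _).symm)).neg
  have d3 : Continuous fun q : Fin 4 → ℝ => β * mg5S q ^ (β/2-1) * max (q 3) 0 :=
    (continuous_const.mul c3).congr (fun q => (mul_assoc _ _ _).symm)
  have hcomp : ∀ i : Fin 4, Continuous fun q => mg5grad β q i := by
    intro i
    fin_cases i
    · exact d0
    · exact d1
    · exact d2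
    · exact d3
  unfold mg5L
  exact continuous_finset_sum _ fun i _ => (hcomp i).smul continuous_const

private lemma mg5_contDiff (β : ℝ) (hβ1 : 1 < β) :
    ContDiff ℝ 1 (fun q => mg5S q ^ (β/2)) := by
  rw [contDiff_one_iff_fderiv]
  refine ⟨fun q => (mg5_hasFDerivAt β hβ1 q).differentiableAt, ?_⟩
  have : (fderiv ℝ fun q => mg5S q ^ (β/2)) = fun q => mg5L β q :=
    funext fun q => (mg5_hasFDerivAt β hβ1 q).fderiv
  rw [this]
  exact mg5_cont_grad β hβ1

private lemma mg5_max_mul (t : ℝ) : max t 0 * t = max t 0 ^ 2 := by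
  rcases le_total t 0 with h | h
  · simp [max_eq_right h]
  · simp [max_eq_left h]; ring

private lemma mg5_rpow_sub_one_mul {β : ℝ} (hβ1 : 1 < β) (s : ℝ) (hs : 0 ≤ s) :
    s ^ (β/2 - 1) * s = s ^ (β/2) := by
  rcases eq_or_lt_of_le hs with h | h
  · rw [← h, mul_zero, Real.zero_rpow (by positivity)]
  · rw [← Real.rpow_add_one h.ne', sub_add_cancel]

private lemma mg5_rpow_sq_mul {β : ℝ} (hβ1 : 1 < β) (s : ℝ) (hs : 0 ≤ s) :
    s ^ (β/2 - 1) * s ^ (β/2 - 1) * s = s ^ (β - 1) := by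
  rcases eq_or_lt_of_le hs with h | h
  · rw [← h, mul_zero, Real.zero_rpow (by intro hh; linarith)]
  · rw [← Real.rpow_add h, ← Real.rpow_add_one h.ne']
    congr 1; ring

private lemma mg5_rpow_rpow {β : ℝ} (hβ1 : 1 < β) (s : ℝ) (hs : 0 ≤ s) :
    (s ^ (β/2)) ^ (2 * (β-1) / β) = s ^ (β - 1) := by
  rw [← Real.rpow_mul hs]
  congr 1
  field_simp

private lemma mg5_rpow_le {s a b : ℝ} (hs : 0 ≤ s) (ha : 0 ≤ a) (hab : a ≤ b) :
    s ^ a ≤ s ^ b + 1 := by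
  rcases le_total s 1 with h | h
  · have h1 := Real.rpow_le_one hs h ha
    have h2 := Real.rpow_nonneg hs b
    linarith
  · have := Real.rpow_le_rpow_of_exponent_le h hab
    linarith

private lemma mg5_dot_self_nonneg (p : Fin 4 → ℝ) : 0 ≤ dot4 p p := by
  unfold dot4
  nlinarith [mul_self_nonneg (p 0), mul_self_nonneg (p 1), mul_self_nonneg (p 2),
    mul_self_nonneg (p 3)]

private lemma mg5_norm4_sq (p : Fin 4 → ℝ) : norm4 p ^ 2 = dot4 p p :=
  Real.sq_sqrt (mg5_dot_self_nonneg p)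

private lemma mg5_dot_grad_q (β : ℝ) (hβ1 : 1 < β) (q : Fin 4 → ℝ) :
    dot4 (mg5grad β q) q = β * mg5S q ^ (β/2) := by
  have e0 : max (-(q 0)) 0 * q 0 = -(max (-(q 0)) 0 ^ 2) := by
    linear_combination -mg5_max_mul (-(q 0))
  have e1 : max (q 1) 0 * q 1 = max (q 1) 0 ^ 2 := mg5_max_mul (q 1)
  have e2 : max (-(q 2)) 0 * q 2 = -(max (-(q 2)) 0 ^ 2) := by
    linear_combination -mg5_max_mul (-(q 2))
  have e3 : max (q 3) 0 * q 3 = max (q 3) 0 ^ 2 := mg5_max_mul (q 3)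
  have hA := mg5_rpow_sub_one_mul hβ1 (mg5S q) (mg5S_nonneg q)
  have hS4 : mg5S q = max (-(q 0)) 0 ^ 2 + max (q 1) 0 ^ 2 + max (-(q 2)) 0 ^ 2
      + max (q 3) 0 ^ 2 := rfl
  show -(β * mg5S q ^ (β/2-1) * max (-(q 0)) 0) * q 0
      + β * mg5S q ^ (β/2-1) * max (q 1) 0 * q 1
      + -(β * mg5S q ^ (β/2-1) * max (-(q 2)) 0) * q 2
      + β * mg5S q ^ (β/2-1) * max (q 3) 0 * q 3 = β * mg5S q ^ (β/2)
  rw [← hA]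
  linear_combination (-(β * mg5S q ^ (β/2-1))) * e0 + (β * mg5S q ^ (β/2-1)) * e1
    + (-(β * mg5S q ^ (β/2-1))) * e2 + (β * mg5S q ^ (β/2-1)) * e3
    + (-(β * mg5S q ^ (β/2-1))) * hS4

private lemma mg5_dot_grad_grad (β : ℝ) (hβ1 : 1 < β) (q : Fin 4 → ℝ) :
    dot4 (mg5grad β q) (mg5grad β q) = β ^ 2 * mg5S q ^ (β - 1) := by
  have hA := mg5_rpow_sq_mul hβ1 (mg5S q) (mg5S_nonneg q)
  have hS4 : mg5S q = max (-(q 0)) 0 ^ 2 + max (q 1) 0 ^ 2 + max (-(q 2)) 0 ^ 2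
      + max (q 3) 0 ^ 2 := rfl
  show -(β * mg5S q ^ (β/2-1) * max (-(q 0)) 0) * -(β * mg5S q ^ (β/2-1) * max (-(q 0)) 0)
      + β * mg5S q ^ (β/2-1) * max (q 1) 0 * (β * mg5S q ^ (β/2-1) * max (q 1) 0)
      + -(β * mg5S q ^ (β/2-1) * max (-(q 2)) 0) * -(β * mg5S q ^ (β/2-1) * max (-(q 2)) 0)
      + β * mg5S q ^ (β/2-1) * max (q 3) 0 * (β * mg5S q ^ (β/2-1) * max (q 3) 0)
      = β ^ 2 * mg5S q ^ (β - 1)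
  rw [← hA]
  linear_combination (-(β^2 * mg5S q ^ (β/2-1) * mg5S q ^ (β/2-1))) * hS4

/-- The model numerical Hamiltonian satisfies (g5).
For `g(x,q) = ℋ(x) + G(q₁⁻, q₂⁺, q₃⁻, q₄⁺)` with `G(p) = |p|^β`, `1 < β ≤ 2`:
`g` is C¹ in `q`, the gradient identities hold, and (g5) holds. -/
theorem model_Hamiltonian_g5 (β : ℝ) (hβ1 : 1 < β) (hβ2 : β ≤ 2)
    (ℋ : Torus → ℝ) (hℋ : Continuous ℋ)
    (G : (Fin 4 → ℝ) → ℝ)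
    (hG : G = fun p => (p 0 ^ 2 + p 1 ^ 2 + p 2 ^ 2 + p 3 ^ 2) ^ (β / 2))
    (g : Torus → (Fin 4 → ℝ) → ℝ)
    (hg : g = fun x q =>
      ℋ x + G ![max (-(q 0)) 0, max (q 1) 0, max (-(q 2)) 0, max (q 3) 0]) :
    (∀ x, ContDiff ℝ 1 (g x)) ∧
    (∀ x (q : Fin 4 → ℝ),
      dot4 (fun i => fderiv ℝ (g x) q (Pi.single i 1)) q
        = β * G ![max (-(q 0)) 0, max (q 1) 0, max (-(q 2)) 0, max (q 3) 0]) ∧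
    (∀ x (q : Fin 4 → ℝ),
      (norm4 (fun i => fderiv ℝ (g x) q (Pi.single i 1))) ^ 2
        = β ^ 2 * (G ![max (-(q 0)) 0, max (q 1) 0, max (-(q 2)) 0, max (q 3) 0])
            ^ (2 * (β - 1) / β)) ∧
    Hg5 g (fun x q i => fderiv ℝ (g x) q (Pi.single i 1)) := by
  have hβ0 : (0:ℝ) < β := by linarith
  have hGS : ∀ q : Fin 4 → ℝ,
      G ![max (-(q 0)) 0, max (q 1) 0, max (-(q 2)) 0, max (q 3) 0] = mg5S q ^ (β/2) := by
    intro q; rw [hG]; rfl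
  have hgx : ∀ x, g x = fun q => ℋ x + mg5S q ^ (β/2) := by
    intro x; rw [hg]
    funext q
    show ℋ x + G ![max (-(q 0)) 0, max (q 1) 0, max (-(q 2)) 0, max (q 3) 0] = _
    rw [hGS]
  have hfder : ∀ x (q : Fin 4 → ℝ), HasFDerivAt (g x) (mg5L β q) q := by
    intro x q
    rw [hgx x]
    exact (mg5_hasFDerivAt β hβ1 q).const_add (ℋ x)
  have hgrad : ∀ x (q : Fin 4 → ℝ),
      (fun i => fderiv ℝ (g x) q (Pi.single i 1)) = mg5grad β q := by
    intro x q
    funext i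
    rw [(hfder x q).fderiv, mg5L_apply]
    fin_cases i <;> simp [Fin.sum_univ_four, Pi.single_apply]
  refine ⟨?_, ?_, ?_, ?_⟩
  · intro x; rw [hgx x]
    exact contDiff_const.add (mg5_contDiff β hβ1)
  · intro x q
    rw [hgrad x q, mg5_dot_grad_q β hβ1 q, hGS]
  · intro x q
    rw [hgrad x q, mg5_norm4_sq, mg5_dot_grad_grad β hβ1 q, hGS,
      mg5_rpow_rpow hβ1 _ (mg5S_nonneg q)]
  · obtain ⟨C, hC⟩ := isCompact_univ.exists_bound_of_continuousOn hℋ.continuousOn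
    refine ⟨(β-1)/β^2, (β-1) + |C| + 1, β, β,
      by have h1 : (0:ℝ) < β - 1 := by linarith
         positivity,
      by have h2 := abs_nonneg C; linarith, hβ0, hβ0, ?_⟩
    intro x q
    have hgq : g x q = ℋ x + mg5S q ^ (β/2) := by rw [hgx x]
    have hs := mg5S_nonneg q
    constructor
    · simp only [hgrad x q]
      rw [mg5_norm4_sq, mg5_dot_grad_grad β hβ1 q, mg5_dot_grad_q β hβ1 q, hgq]
      have h1 : mg5S q ^ (β-1) ≤ mg5S q ^ (β/2) + 1 :=
        mg5_rpow_le hs (by linarith) (by linarith)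
      have hx : ℋ x ≤ |C| :=
        le_trans (le_trans (le_abs_self _) (hC x trivial)) (le_abs_self C)
      have hc1 : (β-1)/β^2 * (β^2 * mg5S q ^ (β-1)) = (β-1) * mg5S q ^ (β-1) := by
        field_simp
      rw [hc1]
      have h2 : (β-1) * mg5S q ^ (β-1) ≤ (β-1) * (mg5S q ^ (β/2) + 1) :=
        mul_le_mul_of_nonneg_left h1 (by linarith)
      linarith
    · simp only [hgrad x q]
      have key : ∀ t : ℝ, max t 0 ^ 2 ≤ t * t := by
        intro t
        rcases le_total t 0 with h | h
        · simp [max_eq_right h]; nlinarith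
        · simp [max_eq_left h]; nlinarith
      have hq2 : mg5S q ≤ norm4 q ^ 2 := by
        rw [mg5_norm4_sq]
        have hS4 : mg5S q = max (-(q 0)) 0 ^ 2 + max (q 1) 0 ^ 2 + max (-(q 2)) 0 ^ 2
            + max (q 3) 0 ^ 2 := rfl
        have hd : dot4 q q = q 0 * q 0 + q 1 * q 1 + q 2 * q 2 + q 3 * q 3 := rfl
        rw [hS4, hd]
        nlinarith [key (-(q 0)), key (q 1), key (-(q 2)), key (q 3)]
      have hnq : 0 ≤ norm4 q := Real.sqrt_nonneg _
      have hbound : dot4 (mg5grad β q) (mg5grad β q) ≤ (β * norm4 q + β)^2 := by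
        rw [mg5_dot_grad_grad β hβ1 q]
        have h1 : mg5S q ^ (β-1) ≤ mg5S q ^ (1:ℝ) + 1 :=
          mg5_rpow_le hs (by linarith) (by linarith)
        rw [Real.rpow_one] at h1
        nlinarith
      calc norm4 (mg5grad β q)
          = Real.sqrt (dot4 (mg5grad β q) (mg5grad β q)) := rfl
        _ ≤ Real.sqrt ((β * norm4 q + β)^2) := Real.sqrt_le_sqrt hbound
        _ = β * norm4 q + β := Real.sqrt_sq (by positivity)

end
end

section
/- Assume (g1) and (g3) for the numerical Hamiltonian g, assume F : ℝ≥0 → ℝ satisfies F(t) ≥ F̲ for all t ≥ 0, and let M₀ = max_{x ∈ 𝕋²} g(x, 0, 0, 0, 0). Let (m^n)_{0≤n<N_T} be nonnegative grid functions and let (u^n)_{0≤n≤N_T} be grid functions satisfying the discrete Bellman equation (u^{n+1}_{i,j} − u^n_{i,j})/Δt − ν(Δ_h u^{n+1})_{i,j} + g(x_{i,j}, [∇_h u^{n+1}]_{i,j}) = F(m^n_{i,j}) for all i,j and all 0 ≤ n < N_T. Then for all i, j, n: u^n_{i,j} ≥ u̲ − T · (F̲ − M₀)⁻, where u̲ =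 min_{i,j} u⁰_{i,j} and r⁻ = max(−r, 0). -/
open Finset

noncomputable section

/-- If the four components of `q` have the right signs at a discrete minimum,
monotonicity (g1) gives `g x q ≤ g x 0`. -/
lemma g_le_at_min (g : Torus → (Fin 4 → ℝ) → ℝ) (hg1 : Hg1 g) (x : Torus)
    (q : Fin 4 → ℝ) (h0 : 0 ≤ q 0) (h1 : q 1 ≤ 0) (h2 : 0 ≤ q 2) (h3 : q 3 ≤ 0) :
    g x q ≤ g x (fun _ => 0) := by
  have A := (hg1 x q 0 (q 0) h0).1
  rw [Function.update_eq_self] at A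
  set q1 := Function.update q 0 0 with hq1
  have B := (hg1 x q1 (q 1) 0 h1).2.2.1
  have e1 : Function.update q1 1 (q 1) = q1 := by
    have : q1 1 = q 1 := Function.update_of_ne (by decide) _ _
    rw [← this, Function.update_eq_self]
  rw [e1] at B
  set q2 := Function.update q1 1 0 with hq2
  have Cc := (hg1 x q2 0 (q 2) h2).2.1
  have e2 : Function.update q2 2 (q 2) = q2 := by
    have : q2 2 = q 2 := by
      rw [hq2, hq1, Function.update_of_ne (by decide), Function.update_of_ne (by decide)]
    rw [← this, Function.update_eq_self]
  rw [e2] at Cc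
  set q3 := Function.update q2 2 0 with hq3
  have D := (hg1 x q3 (q 3) 0 h3).2.2.2
  have e3 : Function.update q3 3 (q 3) = q3 := by
    have : q3 3 = q 3 := by
      rw [hq3, hq2, hq1, Function.update_of_ne (by decide),
        Function.update_of_ne (by decide), Function.update_of_ne (by decide)]
    rw [← this, Function.update_eq_self]
  rw [e3] at D
  have efin : Function.update q3 3 0 = fun _ => 0 := by
    funext t
    fin_cases t <;> simp [hq3, hq2, hq1, Function.update]
  rw [efin] at D
  linarith

/-- Lower bound for the solution of the discrete Bellman equation.
Under (g1), (g3), if `F ≥ F̲` on `[0,∞)` and `(u^n)` solves the discrete Bellman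
equation with nonnegative data `(m^n)`, then
`u^n_{i,j} ≥ u̲ − T (F̲ − max_x g(x,0))⁻` for all `i, j` and `n ≤ N_T`. -/
theorem discrete_Bellman_lower_bound (N NT : ℕ) [NeZero N] (hNT : 0 < NT)
    (T ν : ℝ) (hT : 0 < T) (hν : 0 < ν)
    (g : Torus → (Fin 4 → ℝ) → ℝ) (gq : Torus → (Fin 4 → ℝ) → (Fin 4 → ℝ))
    (hg1 : Hg1 g) (hg3 : Hg3 g gq)
    (F : ℝ → ℝ) (Fbar : ℝ) (hF : ∀ t : ℝ, 0 ≤ t → Fbar ≤ F t)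
    (u m : ℕ → ZMod N → ZMod N → ℝ)
    (hm : ∀ n < NT, ∀ i j, 0 ≤ m n i j)
    (hB : BellmanEq g ν (T / NT) F u m NT) :
    ∀ n ≤ NT, ∀ i j,
      (Finset.univ.inf' Finset.univ_nonempty
          (fun p : ZMod N × ZMod N => u 0 p.1 p.2))
        - T * max (-(Fbar - ⨆ x : Torus, g x (fun _ => 0))) 0
      ≤ u n i j := by
  set S : ℝ := ⨆ x : Torus, g x (fun _ => 0) with hSdef
  set C : ℝ := max (-(Fbar - S)) 0 with hCdef
  have hC0 : 0 ≤ C := le_max_right _ _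
  have hFSC : -C ≤ Fbar - S := by
    have : -(Fbar - S) ≤ C := le_max_left _ _
    linarith
  have hgS : ∀ x : Torus, g x (fun _ => 0) ≤ S := by
    intro x
    have hcont : Continuous (fun x : Torus => g x (fun _ => 0)) := by
      have := hg3.1
      exact this.comp (continuous_id.prodMk continuous_const)
    exact le_ciSup (isCompact_range hcont).bddAbove x
  have hΔt : (0:ℝ) < T / NT := by
    apply div_pos hT
    exact_mod_cast hNT
  set Δt : ℝ := T / NT with hΔtdef
  have hh : (0:ℝ) < gridh N := by
    unfold gridh
    have : (0:ℝ) < N := by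
      exact_mod_cast Nat.pos_of_ne_zero (NeZero.ne N)
    positivity
  set minu : ℕ → ℝ := fun n =>
    Finset.univ.inf' Finset.univ_nonempty (fun p : ZMod N × ZMod N => u n p.1 p.2)
    with hminu
  have hminu_le : ∀ n i j, minu n ≤ u n i j := by
    intro n i j
    exact Finset.inf'_le _ (Finset.mem_univ (i, j))
  have key : ∀ k < NT, minu k - Δt * C ≤ minu (k + 1) := by
    intro k hk
    obtain ⟨p, -, hp⟩ := Finset.exists_mem_eq_inf' (Finset.univ_nonempty)
      (fun p : ZMod N × ZMod N => u (k + 1) p.1 p.2)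
    obtain ⟨i, j⟩ := p
    have hmin : ∀ a b, u (k + 1) i j ≤ u (k + 1) a b := by
      intro a b
      have h := Finset.inf'_le (fun p : ZMod N × ZMod N => u (k + 1) p.1 p.2)
        (Finset.mem_univ (a, b))
      rw [hp] at h
      exact h
    have hlap : 0 ≤ laph (u (k + 1)) i j := by
      unfold laph
      apply div_nonneg _ (sq_nonneg _)
      have h1 := hmin (i + 1) j
      have h2 := hmin (i - 1) j
      have h3 := hmin i (j + 1)
      have h4 := hmin i (j - 1)
      linarith
    have hgle : g (gridPt N i j) (nablah (u (k + 1)) i j) ≤ S := by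
      refine le_trans (g_le_at_min g hg1 _ _ ?_ ?_ ?_ ?_) (hgS _)
      · show (0:ℝ) ≤ D1 (u (k+1)) i j
        unfold D1
        exact div_nonneg (by linarith [hmin (i+1) j]) hh.le
      · show D1 (u (k+1)) (i-1) j ≤ 0
        unfold D1
        rw [sub_add_cancel]
        exact div_nonpos_of_nonpos_of_nonneg (by linarith [hmin (i-1) j]) hh.le
      · show (0:ℝ) ≤ D2 (u (k+1)) i j
        unfold D2
        exact div_nonneg (by linarith [hmin i (j+1)]) hh.le
      · show D2 (u (k+1)) i (j-1) ≤ 0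
        unfold D2
        rw [sub_add_cancel]
        exact div_nonpos_of_nonpos_of_nonneg (by linarith [hmin i (j-1)]) hh.le
    have hBel := hB k hk i j
    have hFm : Fbar ≤ F (m k i j) := hF _ (hm k hk i j)
    have hslope : -C ≤ ν * laph (u (k + 1)) i j
        - g (gridPt N i j) (nablah (u (k + 1)) i j) + F (m k i j) := by
      have := mul_nonneg hν.le hlap
      linarith
    have heq : u (k + 1) i j - u k i j =
        Δt * (ν * laph (u (k + 1)) i j
          - g (gridPt N i j) (nablah (u (k + 1)) i j) + F (m k i j)) := by
      have hX : (u (k + 1) i j - u k i j) / Δt = ν * laph (u (k + 1)) i j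
          - g (gridPt N i j) (nablah (u (k + 1)) i j) + F (m k i j) := by linarith
      rw [← hX]
      field_simp
    have hstep : u k i j + Δt * (-C) ≤ u (k + 1) i j := by
      have := mul_le_mul_of_nonneg_left hslope hΔt.le
      linarith
    have hm1 : minu (k + 1) = u (k + 1) i j := hp
    have hm2 : minu k ≤ u k i j := hminu_le k i j
    rw [hm1]
    have : Δt * (-C) = -(Δt * C) := by ring
    linarith [this ▸ hstep]
  have main : ∀ n ≤ NT, minu 0 - (n : ℝ) * Δt * C ≤ minu n := by
    intro n hn
    induction n with
    | zero => simp
    | succ k ih =>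
      have hk : k < NT := Nat.lt_of_succ_le hn
      have h1 := ih (le_of_lt hk)
      have h2 := key k hk
      push_cast
      linarith
  intro n hn i j
  have h1 := main n hn
  have h2 := hminu_le n i j
  have hnT : (n : ℝ) * Δt ≤ T := by
    have hNT' : (0:ℝ) < NT := by exact_mod_cast hNT
    have : (n : ℝ) ≤ NT := by exact_mod_cast hn
    calc (n : ℝ) * Δt ≤ (NT : ℝ) * Δt := by
          exact mul_le_mul_of_nonneg_right this hΔt.le
      _ = T := by rw [hΔtdef]; field_simp
  have h3 : (n : ℝ) * Δt * C ≤ T * C := mul_le_mul_of_nonneg_right hnT hC0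
  have : minu 0 - T * C ≤ u n i j := by linarith
  exact this

end
end

section
/- Assume (g1) and (g3) for the numerical Hamiltonian g. Then for any grid function v, any grid function m with m_{i,j} > 0 for all i,j, and any η > 0: Σ_{i,j} 𝒯_{i,j}(v, m) ln(m_{i,j}) ≤ (η/2) Σ_{i,j} [∇_h ln(m)]_{i,j} · [∇_h m]_{i,j} + (1/(2η)) Σ_{i,j} m_{i,j} |∇_q g(x_{i,j}, [∇_h v]_{i,j})|², where ln(m) denotes the grid function (ln m_{i,j})_{i,j} and |·| is the Euclidean norm on ℝ⁴. -/
open Finset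

noncomputable section

namespace TransportAux

lemma deriv_nonpos_of_antitone {f : ℝ → ℝ} {d x : ℝ} (hf : Antitone f)
    (hd : HasDerivAt f d x) : d ≤ 0 := by
  have h := hasDerivAt_iff_tendsto_slope.mp hd
  have h' : Filter.Tendsto (slope f x) (nhdsWithin x (Set.Ioi x)) (nhds d) :=
    h.mono_left (nhdsWithin_mono x (fun t ht => ne_of_gt ht))
  refine le_of_tendsto h' ?_
  filter_upwards [self_mem_nhdsWithin] with t ht
  rw [slope_def_field]
  exact div_nonpos_of_nonpos_of_nonneg (sub_nonpos.mpr (hf (le_of_lt ht)))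
    (by simp at ht ⊢; linarith)

lemma deriv_nonneg_of_monotone {f : ℝ → ℝ} {d x : ℝ} (hf : Monotone f)
    (hd : HasDerivAt f d x) : 0 ≤ d := by
  have h := hasDerivAt_iff_tendsto_slope.mp hd
  have h' : Filter.Tendsto (slope f x) (nhdsWithin x (Set.Ioi x)) (nhds d) :=
    h.mono_left (nhdsWithin_mono x (fun t ht => ne_of_gt ht))
  refine ge_of_tendsto h' ?_
  filter_upwards [self_mem_nhdsWithin] with t ht
  rw [slope_def_field]
  exact div_nonneg (sub_nonneg.mpr (hf (le_of_lt ht))) (by simp at ht ⊢; linarith)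

lemma log_mul_le (x y : ℝ) (hx : 0 < x) (hy : 0 < y) :
    y * (Real.log x - Real.log y) ≤ x - y := by
  have h1 : Real.log (x / y) ≤ x / y - 1 := Real.log_le_sub_one_of_pos (div_pos hx hy)
  rw [Real.log_div (ne_of_gt hx) (ne_of_gt hy)] at h1
  have := mul_le_mul_of_nonneg_left h1 (le_of_lt hy)
  calc y * (Real.log x - Real.log y) ≤ y * (x / y - 1) := this
    _ = x - y := by field_simp

lemma young (η w p G : ℝ) (hη : 0 < η) (hw : 0 ≤ w) :
    w * G * p ≤ η / 2 * (w * p ^ 2) + 1 / (2 * η) * (w * G ^ 2) := by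
  rw [← sub_nonneg]
  have key : η / 2 * (w * p ^ 2) + 1 / (2 * η) * (w * G ^ 2) - w * G * p
      = (w * (η * p - G) ^ 2) / (2 * η) := by
    field_simp; ring
  rw [key]; positivity

lemma caseA (η h a b G : ℝ) (hη : 0 < η) (hh : 0 < h) (ha : 0 < a) (hb : 0 < b)
    (hG : G ≤ 0) :
    -(b * (G * ((Real.log a - Real.log b) / h))) ≤
      η / 2 * ((Real.log a - Real.log b) / h * ((a - b) / h)) +
        1 / (2 * η) * (b * G ^ 2) := by
  set t := Real.log a - Real.log b with ht
  rcases le_or_gt t 0 with h0 | h0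
  · have hp : t / h ≤ 0 := div_nonpos_of_nonpos_of_nonneg h0 hh.le
    have hab : a ≤ b := by
      by_contra hc; push_neg at hc
      have := Real.log_lt_log hb hc; simp only [ht] at h0; linarith
    have hGp : 0 ≤ G * (t / h) := by
      have := mul_nonneg (neg_nonneg.2 hG) (neg_nonneg.2 hp); rwa [neg_mul_neg] at this
    have hL : -(b * (G * (t / h))) ≤ 0 := by nlinarith
    have hq : (a - b) / h ≤ 0 := div_nonpos_of_nonpos_of_nonneg (by linarith) hh.le
    have hR1 : 0 ≤ t / h * ((a - b) / h) := by
      have := mul_nonneg (neg_nonneg.2 hp) (neg_nonneg.2 hq); rwa [neg_mul_neg] at this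
    have hR2 : 0 ≤ b * G ^ 2 := mul_nonneg hb.le (sq_nonneg _)
    have e1 : 0 ≤ η / 2 * (t / h * ((a - b) / h)) := mul_nonneg (by positivity) hR1
    have e2 : 0 ≤ 1 / (2 * η) * (b * G ^ 2) := mul_nonneg (by positivity) hR2
    linarith
  · have hkey : b * t ≤ a - b := log_mul_le a b ha hb
    have hy : b * (-G) * (t / h) ≤ η / 2 * (b * (t / h) ^ 2) + 1 / (2 * η) * (b * (-G) ^ 2) :=
      young η b (t / h) (-G) hη hb.le
    have h2 : 0 < t / h := div_pos h0 hh
    have hdiv : (b * t) / h ≤ (a - b) / h := (div_le_div_iff_of_pos_right hh).mpr hkey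
    have hmono : b * (t / h) ^ 2 ≤ t / h * ((a - b) / h) := by
      calc b * (t / h) ^ 2 = t / h * ((b * t) / h) := by ring
        _ ≤ t / h * ((a - b) / h) := mul_le_mul_of_nonneg_left hdiv h2.le
    nlinarith

lemma caseB (η h a b G : ℝ) (hη : 0 < η) (hh : 0 < h) (ha : 0 < a) (hb : 0 < b)
    (hG : 0 ≤ G) :
    -(a * (G * ((Real.log a - Real.log b) / h))) ≤
      η / 2 * ((Real.log a - Real.log b) / h * ((a - b) / h)) +
        1 / (2 * η) * (a * G ^ 2) := by
  set t := Real.log a - Real.log b with ht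
  rcases le_or_gt 0 t with h0 | h0
  · have hp : 0 ≤ t / h := div_nonneg h0 hh.le
    have hab : b ≤ a := by
      by_contra hc; push_neg at hc
      have := Real.log_lt_log ha hc; simp only [ht] at h0; linarith
    have hL : -(a * (G * (t / h))) ≤ 0 := by
      have : 0 ≤ a * (G * (t / h)) := mul_nonneg ha.le (mul_nonneg hG hp)
      linarith
    have hR1 : 0 ≤ t / h * ((a - b) / h) :=
      mul_nonneg hp (div_nonneg (by linarith) hh.le)
    have e1 : 0 ≤ η / 2 * (t / h * ((a - b) / h)) := mul_nonneg (by positivity) hR1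
    have e2 : 0 ≤ 1 / (2 * η) * (a * G ^ 2) :=
      mul_nonneg (by positivity) (mul_nonneg ha.le (sq_nonneg _))
    linarith
  · have hkey : a * (-t) ≤ b - a := by
      have := log_mul_le b a hb ha
      have e : Real.log b - Real.log a = -t := by rw [ht]; ring
      rw [e] at this; linarith
    have hy : a * G * (-(t / h)) ≤ η / 2 * (a * (-(t / h)) ^ 2) + 1 / (2 * η) * (a * G ^ 2) :=
      young η a (-(t / h)) G hη ha.le
    have h2 : 0 < -(t / h) := by
      have : t / h < 0 := div_neg_of_neg_of_pos h0 hh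
      linarith
    have hdiv : (a * (-t)) / h ≤ (b - a) / h := (div_le_div_iff_of_pos_right hh).mpr hkey
    have hmono : a * (-(t / h)) ^ 2 ≤ t / h * ((a - b) / h) := by
      calc a * (-(t / h)) ^ 2 = -(t / h) * ((a * (-t)) / h) := by ring
        _ ≤ -(t / h) * ((b - a) / h) := mul_le_mul_of_nonneg_left hdiv h2.le
        _ = t / h * ((a - b) / h) := by ring
    nlinarith

lemma shift_i {N : ℕ} [NeZero N] (f : ZMod N → ZMod N → ℝ) (c : ZMod N) :
    ∑ i, ∑ j, f (i + c) j = ∑ i, ∑ j, f i j :=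
  Fintype.sum_equiv (Equiv.addRight c) _ _ (fun _ => rfl)

lemma shift_j {N : ℕ} [NeZero N] (f : ZMod N → ZMod N → ℝ) (c : ZMod N) :
    ∑ i, ∑ j, f i (j + c) = ∑ i, ∑ j, f i j :=
  Finset.sum_congr rfl (fun i _ => Fintype.sum_equiv (Equiv.addRight c) _ _ (fun _ => rfl))

end TransportAux

/-- Estimate on `Σ 𝒯_{i,j}(v,m) ln(m_{i,j})`. -/
theorem transport_log_estimate (N : ℕ) [NeZero N]
    (g : Torus → (Fin 4 → ℝ) → ℝ) (gq : Torus → (Fin 4 → ℝ) → (Fin 4 → ℝ))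
    (hg1 : Hg1 g) (hg3 : Hg3 g gq)
    (v m : ZMod N → ZMod N → ℝ) (hm : ∀ i j, 0 < m i j)
    (η : ℝ) (hη : 0 < η) :
    ∑ i, ∑ j, Transp gq v m i j * Real.log (m i j)
      ≤ (η / 2) * ∑ i, ∑ j,
          dot4 (nablah (fun a b => Real.log (m a b)) i j) (nablah m i j)
        + (1 / (2 * η)) * ∑ i, ∑ j,
            m i j * (norm4 (gq (gridPt N i j) (nablah v i j))) ^ 2 := by
  classical
  have hh : 0 < gridh N := by
    unfold gridh
    have : 0 < (N : ℝ) := by exact_mod_cast Nat.pos_of_ne_zero (NeZero.ne N)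
    positivity
  -- abbreviations
  set L : ZMod N → ZMod N → ℝ := fun a b => Real.log (m a b) with hLdef
  set G : ZMod N → ZMod N → Fin 4 → ℝ :=
    fun i j => gq (gridPt N i j) (nablah v i j) with hGdef
  -- sign conditions on gq
  have hgq0 : ∀ x q, gq x q 0 ≤ 0 := fun x q =>
    TransportAux.deriv_nonpos_of_antitone
      (fun s t hst => (hg1 x q s t hst).1) (hg3.2.2 x q 0)
  have hgq2 : ∀ x q, gq x q 2 ≤ 0 := fun x q =>
    TransportAux.deriv_nonpos_of_antitone
      (fun s t hst => (hg1 x q s t hst).2.1) (hg3.2.2 x q 2)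
  have hgq1 : ∀ x q, 0 ≤ gq x q 1 := fun x q =>
    TransportAux.deriv_nonneg_of_monotone
      (fun s t hst => (hg1 x q s t hst).2.2.1) (hg3.2.2 x q 1)
  have hgq3 : ∀ x q, 0 ≤ gq x q 3 := fun x q =>
    TransportAux.deriv_nonneg_of_monotone
      (fun s t hst => (hg1 x q s t hst).2.2.2) (hg3.2.2 x q 3)
  -- summed-by-parts integrand and correcting telescopes
  set S : ZMod N → ZMod N → ℝ :=
    fun i j => -(m i j * dot4 (G i j) (nablah L i j)) with hSdef
  set F0 : ZMod N → ZMod N → ℝ := fun i j => m i j * G i j 0 * L (i + 1) j with hF0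
  set F1 : ZMod N → ZMod N → ℝ := fun i j => m i j * G i j 1 * L (i - 1) j with hF1
  set F2 : ZMod N → ZMod N → ℝ := fun i j => m i j * G i j 2 * L i (j + 1) with hF2
  set F3 : ZMod N → ZMod N → ℝ := fun i j => m i j * G i j 3 * L i (j - 1) with hF3
  set C : ZMod N → ZMod N → ℝ := fun i j =>
    (1 / gridh N) * ((F0 i j - F0 (i - 1) j) + (F1 (i + 1) j - F1 i j)
      + (F2 i j - F2 i (j - 1)) + (F3 i (j + 1) - F3 i j)) with hCdef
  have e : ∀ i j, Transp gq v m i j * Real.log (m i j) = S i j + C i j := by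
    intro i j
    simp only [hSdef, hCdef, hF0, hF1, hF2, hF3, hLdef, hGdef, Transp, dot4, nablah, D1, D2,
      Matrix.cons_val_zero, Matrix.cons_val_one, Matrix.head_cons,
      Matrix.cons_val_two, Matrix.cons_val_three, Matrix.tail_cons, Matrix.head_fin_const,
      sub_add_cancel, add_sub_cancel_right]
    ring
  have sumC : ∑ i, ∑ j, C i j = 0 := by
    have s0 : ∑ i, ∑ j, F0 (i - 1) j = ∑ i, ∑ j, F0 i j := by
      simpa [sub_eq_add_neg] using TransportAux.shift_i F0 (-1)
    have s1 : ∑ i, ∑ j, F1 (i + 1) j = ∑ i, ∑ j, F1 i j := TransportAux.shift_i F1 1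
    have s2 : ∑ i, ∑ j, F2 i (j - 1) = ∑ i, ∑ j, F2 i j := by
      simpa [sub_eq_add_neg] using TransportAux.shift_j F2 (-1)
    have s3 : ∑ i, ∑ j, F3 i (j + 1) = ∑ i, ∑ j, F3 i j := TransportAux.shift_j F3 1
    calc ∑ i, ∑ j, C i j
        = (1 / gridh N) * ∑ i, ∑ j, ((F0 i j - F0 (i - 1) j) + (F1 (i + 1) j - F1 i j)
            + (F2 i j - F2 i (j - 1)) + (F3 i (j + 1) - F3 i j)) := by
          rw [Finset.mul_sum]
          refine Finset.sum_congr rfl fun i _ => ?_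
          rw [Finset.mul_sum]
      _ = 0 := by
          simp only [Finset.sum_add_distrib, Finset.sum_sub_distrib]
          rw [s0, s1, s2, s3]; ring
  have sum_eq : ∑ i, ∑ j, Transp gq v m i j * Real.log (m i j) = ∑ i, ∑ j, S i j := by
    calc ∑ i, ∑ j, Transp gq v m i j * Real.log (m i j)
        = ∑ i, ∑ j, (S i j + C i j) :=
          Finset.sum_congr rfl fun i _ => Finset.sum_congr rfl fun j _ => e i j
      _ = (∑ i, ∑ j, S i j) + ∑ i, ∑ j, C i j := by
          simp only [Finset.sum_add_distrib]
      _ = ∑ i, ∑ j, S i j := by rw [sumC, add_zero]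
  have pt : ∀ i j, S i j ≤ η / 2 * dot4 (nablah L i j) (nablah m i j)
      + 1 / (2 * η) * (m i j * (norm4 (G i j)) ^ 2) := by
    intro i j
    have hnorm : (norm4 (G i j)) ^ 2
        = G i j 0 ^ 2 + G i j 1 ^ 2 + G i j 2 ^ 2 + G i j 3 ^ 2 := by
      rw [norm4, Real.sq_sqrt]
      · unfold dot4; ring
      · unfold dot4
        nlinarith [sq_nonneg (G i j 0), sq_nonneg (G i j 1), sq_nonneg (G i j 2),
          sq_nonneg (G i j 3)]
    have t0 := TransportAux.caseA η (gridh N) (m (i + 1) j) (m i j) (G i j 0)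
      hη hh (hm _ _) (hm _ _) (hgq0 (gridPt N i j) (nablah v i j))
    have t1 := TransportAux.caseB η (gridh N) (m i j) (m (i - 1) j) (G i j 1)
      hη hh (hm _ _) (hm _ _) (hgq1 (gridPt N i j) (nablah v i j))
    have t2 := TransportAux.caseA η (gridh N) (m i (j + 1)) (m i j) (G i j 2)
      hη hh (hm _ _) (hm _ _) (hgq2 (gridPt N i j) (nablah v i j))
    have t3 := TransportAux.caseB η (gridh N) (m i j) (m i (j - 1)) (G i j 3)
      hη hh (hm _ _) (hm _ _) (hgq3 (gridPt N i j) (nablah v i j))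
    rw [hnorm]
    simp only [hSdef, hLdef, dot4, nablah, D1, D2,
      Matrix.cons_val_zero, Matrix.cons_val_one, Matrix.head_cons,
      Matrix.cons_val_two, Matrix.cons_val_three, Matrix.tail_cons,
      sub_add_cancel, add_sub_cancel_right]
    nlinarith [t0, t1, t2, t3]
  calc ∑ i, ∑ j, Transp gq v m i j * Real.log (m i j)
      = ∑ i, ∑ j, S i j := sum_eq
    _ ≤ ∑ i, ∑ j, (η / 2 * dot4 (nablah L i j) (nablah m i j)
          + 1 / (2 * η) * (m i j * (norm4 (G i j)) ^ 2)) :=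
        Finset.sum_le_sum fun i _ => Finset.sum_le_sum fun j _ => pt i j
    _ = (η / 2) * (∑ i, ∑ j, dot4 (nablah L i j) (nablah m i j))
          + (1 / (2 * η)) * ∑ i, ∑ j, m i j * (norm4 (G i j)) ^ 2 := by
        simp only [Finset.sum_add_distrib, ← Finset.mul_sum]



end
end

section
/- Let (m^k)_{k=0,…,N_T} be grid functions on 𝕋²_h such that every m^k belongs to 𝒦_h and m^k_{i,j} > 0 for all i,j,k. Then for any 0 ≤ n < N_T: h² Σ_{k=n}^{N_T−1} Σ_{i,j} ( m^{k+1}_{i,j} − m^k_{i,j} ) ln(m^k_{i,j}) ≤ h² Σ_{i,j} m^{N_T}_{i,j} ln(m^{N_T}_{i,j}) − h² Σ_{i,j} m^n_{i,j} ln(m^n_{i,j}) + 1. -/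
open Finset

noncomputable section

lemma entropy_key (a b : ℝ) (ha : 0 < a) (hb : 0 < b) :
    (a - b) * Real.log b ≤ a * Real.log a - b * Real.log b - (a - b) := by
  have h1 : Real.log (b / a) ≤ b / a - 1 := Real.log_le_sub_one_of_pos (by positivity)
  have h2 : Real.log (b / a) = Real.log b - Real.log a := Real.log_div hb.ne' ha.ne'
  have h3 : a * (Real.log b - Real.log a) ≤ b - a := by
    calc a * (Real.log b - Real.log a) = a * Real.log (b / a) := by rw [h2]
      _ ≤ a * (b / a - 1) := mul_le_mul_of_nonneg_left h1 ha.le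
      _ = b - a := by field_simp
  nlinarith [h3]

/-- Discrete entropy inequality. -/
theorem discrete_entropy_inequality (N NT : ℕ) [NeZero N] (hNT : 0 < NT)
    (m : ℕ → ZMod N → ZMod N → ℝ)
    (hmK : ∀ k ≤ NT, inKh (m k))
    (hmpos : ∀ k ≤ NT, ∀ i j, 0 < m k i j)
    (n : ℕ) (hn : n < NT) :
    (gridh N) ^ 2 * ∑ k ∈ Finset.Ico n NT, ∑ i, ∑ j,
        (m (k + 1) i j - m k i j) * Real.log (m k i j)
      ≤ (gridh N) ^ 2 * ∑ i, ∑ j, m NT i j * Real.log (m NT i j)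
        - (gridh N) ^ 2 * ∑ i, ∑ j, m n i j * Real.log (m n i j) + 1 := by
  set E : ℕ → ℝ := fun k => ∑ i, ∑ j, m k i j * Real.log (m k i j) with hE
  set M : ℕ → ℝ := fun k => ∑ i, ∑ j, m k i j with hM
  have hh : (0:ℝ) ≤ (gridh N) ^ 2 := sq_nonneg _
  have step : ∀ k ∈ Finset.Ico n NT,
      (∑ i, ∑ j, (m (k + 1) i j - m k i j) * Real.log (m k i j))
      ≤ (E (k + 1) - E k) - (M (k + 1) - M k) := by
    intro k hk
    obtain ⟨_, hk2⟩ := Finset.mem_Ico.mp hk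
    have hrhs : (E (k + 1) - E k) - (M (k + 1) - M k)
        = ∑ i, ∑ j, (m (k + 1) i j * Real.log (m (k + 1) i j)
            - m k i j * Real.log (m k i j) - (m (k + 1) i j - m k i j)) := by
      simp only [hE, hM, Finset.sum_sub_distrib]
    rw [hrhs]
    refine Finset.sum_le_sum fun i _ => Finset.sum_le_sum fun j _ => ?_
    exact entropy_key _ _ (hmpos (k + 1) hk2 i j) (hmpos k hk2.le i j)
  have sumle : (∑ k ∈ Finset.Ico n NT, ∑ i, ∑ j,
      (m (k + 1) i j - m k i j) * Real.log (m k i j))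
      ≤ (E NT - E n) - (M NT - M n) := by
    calc (∑ k ∈ Finset.Ico n NT, ∑ i, ∑ j,
        (m (k + 1) i j - m k i j) * Real.log (m k i j))
        ≤ ∑ k ∈ Finset.Ico n NT, ((E (k + 1) - E k) - (M (k + 1) - M k)) :=
          Finset.sum_le_sum step
      _ = (E NT - E n) - (M NT - M n) := by
          rw [Finset.sum_sub_distrib,
            Finset.sum_Ico_eq_sub (fun k => E (k + 1) - E k) hn.le,
            Finset.sum_Ico_eq_sub (fun k => M (k + 1) - M k) hn.le,
            Finset.sum_range_sub, Finset.sum_range_sub,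
            Finset.sum_range_sub, Finset.sum_range_sub]
          ring
  have hMass : ∀ k ≤ NT, (gridh N) ^ 2 * M k = 1 := fun k hk => (hmK k hk).2
  have hMN : (gridh N) ^ 2 * M NT = 1 := hMass NT le_rfl
  have hMn : (gridh N) ^ 2 * M n = 1 := hMass n hn.le
  have := mul_le_mul_of_nonneg_left sumle hh
  nlinarith [this]

end
end

section
/- For any grid function m on 𝕋²_h with m_{i,j} > 0 for all i,j, the discrete Fisher-information bound holds: Σ_{i,j} [ (√(m_{i+1,j}) − √(m_{i,j}))² + (√(m_{i,j+1}) − √(m_{i,j}))² ] ≤ h² Σ_{i,j} (D_h m)_{i,j} · (D_h ln(m))_{i,j}, i.e. |√m|²_{H¹(𝕋²_h)} ≤ h² Σ_{i,j} (D_h m)_{i,j} · (D_h ln(m))_{i,j}, where ln(m) and √m denote the grid functions (ln m_{i,j})_{i,j} and (√(m_{i,j}))_{i,j}. -/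
open Finset

noncomputable section

lemma sqrt_diff_sq_le_aux (a b : ℝ) (ha : 0 < a) (hb : 0 < b) (hab : a ≤ b) :
    (Real.sqrt b - Real.sqrt a) ^ 2 ≤ (b - a) * (Real.log b - Real.log a) := by
  have hx := Real.sqrt_pos.mpr ha
  have hy := Real.sqrt_pos.mpr hb
  have hxy : Real.sqrt a ≤ Real.sqrt b := Real.sqrt_le_sqrt hab
  have hxa : Real.sqrt a ^ 2 = a := Real.sq_sqrt ha.le
  have hyb : Real.sqrt b ^ 2 = b := Real.sq_sqrt hb.le
  have hlog : (b - a) / b ≤ Real.log b - Real.log a := by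
    have h1 := Real.log_le_sub_one_of_pos (div_pos ha hb)
    rw [Real.log_div ha.ne' hb.ne'] at h1
    have h2 : (b - a) / b = 1 - a / b := by field_simp
    linarith [h2 ▸ (by linarith : Real.log b - Real.log a ≥ 1 - a / b)]
  have hba : 0 ≤ b - a := by linarith
  have step1 : (b - a) * ((b - a) / b) ≤ (b - a) * (Real.log b - Real.log a) :=
    mul_le_mul_of_nonneg_left hlog hba
  have step2 : (Real.sqrt b - Real.sqrt a) ^ 2 ≤ (b - a) * ((b - a) / b) := by
    rw [mul_div_assoc', le_div_iff₀ hb]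
    nlinarith [sq_nonneg (Real.sqrt b - Real.sqrt a), sq_nonneg (Real.sqrt b + Real.sqrt a),
      mul_pos hx hy]
  linarith

lemma sqrt_diff_sq_le (a b : ℝ) (ha : 0 < a) (hb : 0 < b) :
    (Real.sqrt b - Real.sqrt a) ^ 2 ≤ (b - a) * (Real.log b - Real.log a) := by
  rcases le_total a b with h | h
  · exact sqrt_diff_sq_le_aux a b ha hb h
  · have := sqrt_diff_sq_le_aux b a hb ha h
    nlinarith [this]

/-- Discrete Fisher-information bound:
`|√m|²_{H¹(𝕋²_h)} ≤ h² Σ_{i,j} (D_h m)_{i,j} · (D_h ln m)_{i,j}` for positive `m`. -/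
theorem discrete_fisher_information_bound (N : ℕ) [NeZero N]
    (m : ZMod N → ZMod N → ℝ) (hm : ∀ i j, 0 < m i j) :
    ∑ i, ∑ j, ((Real.sqrt (m (i + 1) j) - Real.sqrt (m i j)) ^ 2
        + (Real.sqrt (m i (j + 1)) - Real.sqrt (m i j)) ^ 2)
      ≤ (gridh N) ^ 2 * ∑ i, ∑ j,
          (D1 m i j * D1 (fun a b => Real.log (m a b)) i j
            + D2 m i j * D2 (fun a b => Real.log (m a b)) i j) := by
  have hN : (0:ℝ) < N := Nat.cast_pos.mpr (Nat.pos_of_ne_zero (NeZero.ne N))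
  have hh : gridh N ≠ 0 := by unfold gridh; positivity
  rw [mul_sum]
  refine sum_le_sum fun i _ => ?_
  rw [mul_sum]
  refine sum_le_sum fun j _ => ?_
  have e1 : gridh N ^ 2 * (D1 m i j * D1 (fun a b => Real.log (m a b)) i j
      + D2 m i j * D2 (fun a b => Real.log (m a b)) i j)
      = (m (i+1) j - m i j) * (Real.log (m (i+1) j) - Real.log (m i j))
        + (m i (j+1) - m i j) * (Real.log (m i (j+1)) - Real.log (m i j)) := by
    unfold D1 D2
    field_simp
  rw [e1]
  exact add_le_add (sqrt_diff_sq_le _ _ (hm i j) (hm (i+1) j))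
    (sqrt_diff_sq_le _ _ (hm i j) (hm i (j+1)))

end
end

section
/- For every real number z > −1: (√(1+z) − 1)² ≤ z · ln(1+z). -/
/-- for every `z > −1`, `(√(1+z) − 1)² ≤ z ln(1+z)`. -/
theorem sqrt_sub_one_sq_le_mul_log (z : ℝ) (hz : -1 < z) :
    (Real.sqrt (1 + z) - 1) ^ 2 ≤ z * Real.log (1 + z) := by
  have h1 : (0:ℝ) < 1 + z := by linarith
  set s := Real.sqrt (1 + z) with hsdef
  have hs0 : 0 < s := Real.sqrt_pos.mpr h1
  have hs2 : s ^ 2 = 1 + z := Real.sq_sqrt h1.le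
  have hlog : Real.log (1 + z) = 2 * Real.log s := by
    rw [← hs2, Real.log_pow]; push_cast; ring
  have hzeq : z = s ^ 2 - 1 := by linarith
  rw [hlog, hzeq]
  rcases le_or_gt 1 s with hs1 | hs1
  · have hL : 1 - s⁻¹ ≤ Real.log s := Real.one_sub_inv_le_log_of_pos hs0
    have hL' : s - 1 ≤ s * Real.log s := by
      have := mul_le_mul_of_nonneg_left hL hs0.le
      rw [mul_sub, mul_inv_cancel₀ hs0.ne'] at this
      linarith
    have hlog0 : 0 ≤ Real.log s := Real.log_nonneg hs1
    nlinarith [mul_nonneg (sub_nonneg.mpr hs1) hlog0, sq_nonneg (s - 1)]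
  · have hU : Real.log s ≤ s - 1 := Real.log_le_sub_one_of_pos hs0
    have hlog0 : Real.log s ≤ 0 := Real.log_nonpos hs0.le hs1.le
    nlinarith [mul_nonneg (sub_nonneg.mpr hs1.le) (neg_nonneg.mpr hlog0),
      sq_nonneg (s - 1), mul_nonneg (sub_nonneg.mpr hs1.le) (sub_nonneg.mpr hs1.le)]
end
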